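/- arXiv:2407.19391 — 10 statements merged into one kernel-verified Lean document; each statement's English description precedes it below -/
import Mathlib

section
/- Let V be a nonempty finite set of n voters, C a finite set of candidates, and k a positive integer with k ≤ |C|. A committee W ⊆ C with |W| = k satisfies JR with respect to parameter k under every possible approval profile A : V → 2^C if and only if W = C (equivalently, k = |C|). (This is the combinatorial core of the lemma that, in the Candidate-Probability model with 0 < p_{i,c} < 1 for all voters i and candidates c — so that every approval profile is plausible — a committee satisfies JR with probability 1 iff W = C and k = |C|.) -/
/-- A committee `W` satisfies justified representation (JR) with respect to the
approval profile `A` and parameter `k`: for every group `V'` of voters with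
`k * |V'| ≥ n` (where `n` is the number of voters) whose approval sets have a
common candidate, some voter in `V'` approves a member of `W`. -/
def satisfiesJR {V C : Type*} [Fintype V] [DecidableEq C]
    (A : V → Finset C) (k : ℕ) (W : Finset C) : Prop :=
  ∀ V' : Finset V, Fintype.card V ≤ k * V'.card →
    (∃ c : C, ∀ i ∈ V', c ∈ A i) → ∃ i ∈ V', (A i ∩ W).Nonempty

/-- with `V` a nonempty finite set of voters, `C` finite,
`1 ≤ k ≤ |C|` and `|W| = k`, the committee `W` satisfies JR under every
possible approval profile iff `W = C`. -/
theorem stmt_0 {V C : Type*} [Fintype V] [Nonempty V] [Fintype C] [DecidableEq C]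
    (k : ℕ) (hk : 1 ≤ k) (hkC : k ≤ Fintype.card C)
    (W : Finset C) (hW : W.card = k) :
    (∀ A : V → Finset C, satisfiesJR A k W) ↔ W = (Finset.univ : Finset C) := by
  constructor
  · intro h
    by_contra hne
    obtain ⟨c, hc⟩ : ∃ c, c ∉ W := by
      by_contra h
      push_neg at h
      exact hne (Finset.eq_univ_iff_forall.mpr h)
    have := h (fun _ => {c}) Finset.univ (by
      have : 1 ≤ k := hk
      calc Fintype.card V = 1 * Fintype.card V := (one_mul _).symm
        _ ≤ k * Fintype.card V := Nat.mul_le_mul_right _ hk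
        _ = k * (Finset.univ : Finset V).card := by rw [Finset.card_univ])
      ⟨c, fun i _ => Finset.mem_singleton_self c⟩
    obtain ⟨i, _, x, hx⟩ := this
    rw [Finset.mem_inter, Finset.mem_singleton] at hx
    exact hc (hx.1 ▸ hx.2)
  · intro hWuniv A V' hcard ⟨c, hc⟩
    have hV' : V'.Nonempty := by
      rw [← Finset.card_pos]
      have hpos : 0 < Fintype.card V := Fintype.card_pos
      rcases Nat.eq_zero_or_pos V'.card with h0 | h
      · rw [h0, Nat.mul_zero] at hcard; omega
      · exact h
    obtain ⟨i, hi⟩ := hV'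
    refine ⟨i, hi, c, ?_⟩
    rw [Finset.mem_inter, hWuniv]
    exact ⟨hc i hi, Finset.mem_univ c⟩
end

section
/- Lottery model: suppose each voter i ∈ V is given a nonempty finite family 𝒮_i of subsets of C (its plausible approval sets), and a plausible approval profile is any profile (A_i)_{i∈V} with A_i ∈ 𝒮_i for every i. Then a committee W ⊆ C satisfies JR (with respect to parameter k) under every plausible approval profile if and only if there do not exist a candidate c ∈ C and a group V₀ ⊆ V with k·|V₀| ≥ n such that every voter i ∈ V₀ has some plausible approval set S ∈ 𝒮_i with c ∈ S and S ∩ W = ∅. (This characterization is the correctness of the polynomial-time algorithm showing that deciding whether a given committee satisfies JR with probability 1 is in P for the Lottery model.) -/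
/-- Lottery model: each voter `i` has a nonempty finite family
`𝒮 i` of plausible approval sets.  A committee `W` satisfies JR under every
plausible approval profile iff there do not exist a candidate `c` and a group
`V₀` with `k * |V₀| ≥ n` such that every voter in `V₀` has some plausible
approval set containing `c` and disjoint from `W`. -/
theorem stmt_1 {V C : Type*} [Fintype V] [Fintype C] [DecidableEq C]
    (k : ℕ) (hk : 1 ≤ k)
    (𝒮 : V → Finset (Finset C)) (h𝒮 : ∀ i, (𝒮 i).Nonempty)
    (W : Finset C) :
    (∀ A : V → Finset C, (∀ i, A i ∈ 𝒮 i) → satisfiesJR A k W) ↔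
      ¬ ∃ (c : C) (V₀ : Finset V), Fintype.card V ≤ k * V₀.card ∧
        ∀ i ∈ V₀, ∃ S ∈ 𝒮 i, c ∈ S ∧ S ∩ W = ∅ := by
  classical
  constructor
  · rintro hJR ⟨c, V₀, hcard, hwit⟩
    choose S hS hcS hSW using hwit
    set A : V → Finset C := fun i =>
      if h : i ∈ V₀ then S i h else (h𝒮 i).choose with hA
    have hAmem : ∀ i, A i ∈ 𝒮 i := by
      intro i
      by_cases h : i ∈ V₀
      · simp [hA, h, hS]
      · simp [hA, h, (h𝒮 i).choose_spec]
    obtain ⟨i, hi, hne⟩ := hJR A hAmem V₀ hcard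
      ⟨c, fun i hi => by simp [hA, hi, hcS]⟩
    rw [hA] at hne
    simp only [hi, dif_pos] at hne
    rw [hSW i hi] at hne
    exact hne.ne_empty rfl
  · intro hno A hA V' hcard ⟨c, hc⟩
    by_contra h
    push_neg at h
    exact hno ⟨c, V', hcard, fun i hi =>
      ⟨A i, hA i, hc i hi, h i hi⟩⟩
end

section
/- Three-Valued Approval (3VA) model with k = n: suppose each voter i ∈ V partitions C into a set a_i of candidates approved with certainty, a set d_i of candidates disapproved with certainty, and a set u_i of unknown candidates (with x_i = |u_i|); the plausible approval sets of voter i are exactly the sets a_i ∪ X with X ⊆ u_i, and a plausible approval profile chooses one plausible approval set for each voter. Let |V| = n ≥ 1, take the JR parameter k = n, fix a committee W ⊆ C, and let y_i = |u_i ∩ W|. Define t_i = 2^{x_i} if a_i ∩ W ≠ ∅; t_i = (2^{y_i} − 1)·2^{x_i − y_i} if a_i ∩ W = ∅ and a_i ≠ ∅; and t_i = (2^{y_i} − 1)·2^{x_i − y_i} + 1 if a_i = ∅. Then the number of plausible approval profiles under which W satisfies JR equals ∏_{i∈V} t_i. -/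
/-- 3VA model with `k = n`: voter `i` partitions the candidates
into certainly approved `a i`, certainly disapproved `d i`, and unknown `u i`
(with `x_i = |u i|`, `y_i = |u i ∩ W|`); a plausible approval set of voter `i`
is any `a i ∪ X` with `X ⊆ u i`.  With `t i` as defined below, the number of
plausible approval profiles under which `W` satisfies JR (with parameter
`k = n`) equals `∏ i, t i`. -/
theorem stmt_5 {V C : Type*} [Fintype V] [DecidableEq V] [Fintype C] [DecidableEq C]
    (hn : 1 ≤ Fintype.card V)
    (a d u : V → Finset C)
    (hpart : ∀ i, a i ∪ d i ∪ u i = Finset.univ)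
    (had : ∀ i, Disjoint (a i) (d i))
    (hau : ∀ i, Disjoint (a i) (u i))
    (hdu : ∀ i, Disjoint (d i) (u i))
    (W : Finset C)
    (t : V → ℕ)
    (ht : ∀ i, t i =
      if (a i ∩ W).Nonempty then 2 ^ (u i).card
      else if (a i).Nonempty then
        (2 ^ (u i ∩ W).card - 1) * 2 ^ ((u i).card - (u i ∩ W).card)
      else
        (2 ^ (u i ∩ W).card - 1) * 2 ^ ((u i).card - (u i ∩ W).card) + 1) :
    Set.ncard {A : V → Finset C |
        (∀ i, a i ⊆ A i ∧ A i ⊆ a i ∪ u i) ∧ satisfiesJR A (Fintype.card V) W}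
      = ∏ i : V, t i := by
  classical
  -- Step 1: with k = n, JR is equivalent to a per-voter condition.
  have hJR : ∀ A : V → Finset C,
      satisfiesJR A (Fintype.card V) W ↔
        ∀ i, (A i).Nonempty → (A i ∩ W).Nonempty := by
    intro A
    constructor
    · intro h i hi
      obtain ⟨c, hc⟩ := hi
      obtain ⟨j, hj, hjw⟩ := h {i}
        (by simpa using Nat.le_mul_of_pos_right (Fintype.card V) (by norm_num))
        ⟨c, by simpa using hc⟩
      simp only [Finset.mem_singleton] at hj
      subst hj; exact hjw
    · rintro h V' hcard ⟨c, hc⟩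
      have hV' : V'.Nonempty := by
        rw [Finset.nonempty_iff_ne_empty]
        rintro rfl
        simp at hcard
        omega
      obtain ⟨i, hi⟩ := hV'
      exact ⟨i, hi, h i ⟨c, hc i hi⟩⟩
  -- Step 2: per-voter finsets of plausible approval sets meeting the condition.
  set S : V → Finset (Finset C) := fun i =>
    ((u i).powerset.filter
      (fun X => (a i ∪ X).Nonempty → ((a i ∪ X) ∩ W).Nonempty)).image
      (fun X => a i ∪ X) with hS
  have hmem : ∀ i (B : Finset C), B ∈ S i ↔
      (a i ⊆ B ∧ B ⊆ a i ∪ u i) ∧ (B.Nonempty → (B ∩ W).Nonempty) := by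
    intro i B
    simp only [hS, Finset.mem_image, Finset.mem_filter, Finset.mem_powerset]
    constructor
    · rintro ⟨X, ⟨hXu, hcond⟩, rfl⟩
      exact ⟨⟨Finset.subset_union_left, Finset.union_subset_union_right hXu⟩, hcond⟩
    · rintro ⟨⟨haB, hBau⟩, hcond⟩
      refine ⟨B \ a i, ⟨?_, ?_⟩, ?_⟩
      · intro x hx
        rw [Finset.mem_sdiff] at hx
        have := hBau hx.1
        rw [Finset.mem_union] at this
        tauto
      · rw [Finset.union_sdiff_of_subset haB]; exact hcond
      · rw [Finset.union_sdiff_of_subset haB]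
  -- Step 3: the set of profiles is the pi-finset of the `S i`.
  have hset : {A : V → Finset C |
      (∀ i, a i ⊆ A i ∧ A i ⊆ a i ∪ u i) ∧ satisfiesJR A (Fintype.card V) W}
      = ↑(Fintype.piFinset S) := by
    ext A
    simp only [Set.mem_setOf_eq, Finset.coe_sort_coe, Finset.mem_coe,
      Fintype.mem_piFinset, hmem, hJR]
    constructor
    · rintro ⟨h1, h2⟩ i; exact ⟨h1 i, h2 i⟩
    · intro h; exact ⟨fun i => (h i).1, fun i => (h i).2⟩
  rw [hset, Set.ncard_coe_finset, Fintype.card_piFinset]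
  -- Step 4: compute each factor.
  refine Finset.prod_congr rfl (fun i _ => ?_)
  have hinj : Set.InjOn (fun X => a i ∪ X)
      ((u i).powerset.filter
        (fun X => (a i ∪ X).Nonempty → ((a i ∪ X) ∩ W).Nonempty)) := by
    intro X hX Y hY hXY
    simp only [Finset.coe_filter, Set.mem_setOf_eq, Finset.mem_powerset] at hX hY
    have hX' : (a i ∪ X) \ a i = X := by
      rw [Finset.union_sdiff_left]
      exact Finset.sdiff_eq_self_of_disjoint (Finset.disjoint_of_subset_left hX.1 (hau i).symm)
    have hY' : (a i ∪ Y) \ a i = Y := by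
      rw [Finset.union_sdiff_left]
      exact Finset.sdiff_eq_self_of_disjoint (Finset.disjoint_of_subset_left hY.1 (hau i).symm)
    rw [← hX', ← hY']
    exact congrArg (· \ a i) hXY
  rw [hS]
  simp only []
  rw [Finset.card_image_of_injOn hinj, ht i]
  -- auxiliary counting facts
  have hyx : (u i ∩ W).card ≤ (u i).card :=
    Finset.card_le_card Finset.inter_subset_left
  have hsd : ((u i) \ W).card = (u i).card - (u i ∩ W).card := by
    have := Finset.card_inter_add_card_sdiff (u i) W
    omega
  have hcount : ((u i).powerset.filter (fun X => (X ∩ W).Nonempty)).card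
      = 2 ^ (u i).card - 2 ^ ((u i).card - (u i ∩ W).card) := by
    have hneg : ((u i).powerset.filter (fun X => ¬ (X ∩ W).Nonempty))
        = (u i \ W).powerset := by
      ext X
      simp only [Finset.mem_filter, Finset.mem_powerset, Finset.not_nonempty_iff_eq_empty,
        ← Finset.disjoint_iff_inter_eq_empty, Finset.subset_sdiff]
    have := Finset.card_filter_add_card_filter_not
      (s := (u i).powerset) (p := fun X => (X ∩ W).Nonempty)
    rw [hneg] at this
    rw [Finset.card_powerset, hsd] at this
    rw [Finset.card_powerset] at this
    omega
  have harith : (2 ^ (u i ∩ W).card - 1) * 2 ^ ((u i).card - (u i ∩ W).card)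
      = 2 ^ (u i).card - 2 ^ ((u i).card - (u i ∩ W).card) := by
    rw [Nat.sub_mul, one_mul, ← pow_add]
    congr 2
    omega
  by_cases h1 : (a i ∩ W).Nonempty
  · rw [if_pos h1]
    rw [Finset.filter_true_of_mem, Finset.card_powerset]
    intro X hX hne
    obtain ⟨c, hc⟩ := h1
    rw [Finset.mem_inter] at hc
    exact ⟨c, Finset.mem_inter.2 ⟨Finset.mem_union_left _ hc.1, hc.2⟩⟩
  · rw [if_neg h1]
    have haW : a i ∩ W = ∅ := Finset.not_nonempty_iff_eq_empty.1 h1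
    have hiW : ∀ X : Finset C, (a i ∪ X) ∩ W = X ∩ W := by
      intro X
      rw [Finset.union_inter_distrib_right, haW, Finset.empty_union]
    by_cases h2 : (a i).Nonempty
    · rw [if_pos h2, harith, ← hcount]
      congr 1
      apply Finset.filter_congr
      intro X hX
      simp only [hiW]
      constructor
      · intro h; exact h (Finset.Nonempty.mono Finset.subset_union_left h2)
      · intro h _; exact h
    · rw [if_neg h2, harith, ← hcount]
      have ha : a i = ∅ := Finset.not_nonempty_iff_eq_empty.1 h2
      have hfc : ((u i).powerset.filter
          (fun X => (a i ∪ X).Nonempty → ((a i ∪ X) ∩ W).Nonempty))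
          = (u i).powerset.filter (fun X => (X ∩ W).Nonempty ∨ X = ∅) := by
        apply Finset.filter_congr
        intro X hX
        simp only [ha, Finset.empty_union, hiW]
        constructor
        · intro h
          rcases Finset.eq_empty_or_nonempty X with h' | h'
          · exact Or.inr h'
          · exact Or.inl (by simpa [ha] using h h')
        · rintro (h | rfl)
          · intro _; simpa [ha] using h
          · intro h'; simp at h'
      rw [hfc, Finset.filter_or, Finset.card_union_of_disjoint]
      · congr 1
        rw [Finset.filter_eq']
        simp
      · rw [Finset.disjoint_left]
        intro X hX hX'
        simp only [Finset.mem_filter] at hX hX'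
        rcases hX' with ⟨-, rfl⟩
        simp at hX
end

section
/- Candidate-Probability reduction for ExistsNecJR: let V be a finite set of n ≥ 1 voters with approval profile A : V → 2^C over a finite candidate set C, let k and r be integers with 1 ≤ r < k. Let V⁺ be a set of n new voters and C⁺ a set of 2k − r new candidates, disjoint from V and C respectively. In the extended election with voter set V ∪ V⁺ (2n voters), candidate set C ∪ C⁺, and parameter 2k, the plausible approval profiles are exactly those in which each original voter i ∈ V approves exactly A_i and each new voter in V⁺ approves an arbitrary subset of C⁺. Then there exists a committee W ⊆ C with |W| = r satisfying JR with respect to (A_i)_{i∈V} and parameter k if and only if there exists a committee W' ⊆ C ∪ C⁺ with |W'| = 2k that satisfies JR (with respect to parameter 2k over the 2n voters) under every plausible approval profile of the extended election. -/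
/-- Candidate-Probability reduction for ExistsNecJR: extend the
election `(V, C, A, k)` by a set `Vp` of `n` new voters and a set `Cp` of
`2k - r` new candidates; in the extended election (with `2n` voters and
parameter `2k`) the plausible profiles are exactly those where each original
voter approves exactly `A i` and each new voter approves an arbitrary subset of
`Cp`.  Then there is a size-`r` committee over `C` satisfying JR (parameter
`k`) iff there is a size-`2k` committee over `C ⊕ Cp` satisfying JR under every
plausible profile of the extended election. -/
theorem stmt_8 {V C Vp Cp : Type*}
    [Fintype V] [Fintype C] [DecidableEq C] [Fintype Vp] [Fintype Cp] [DecidableEq Cp]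
    (hn : 1 ≤ Fintype.card V)
    (k r : ℕ) (hr : 1 ≤ r) (hrk : r < k)
    (hVp : Fintype.card Vp = Fintype.card V)
    (hCp : Fintype.card Cp = 2 * k - r)
    (A : V → Finset C) :
    (∃ W : Finset C, W.card = r ∧ satisfiesJR A k W) ↔
      (∃ W' : Finset (C ⊕ Cp), W'.card = 2 * k ∧
        ∀ B : (V ⊕ Vp) → Finset (C ⊕ Cp),
          (∀ i : V, B (Sum.inl i) = (A i).image Sum.inl) →
          (∀ j : Vp, B (Sum.inr j) ⊆ Finset.univ.image (Sum.inr : Cp → C ⊕ Cp)) →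
          satisfiesJR B (2 * k) W') := by
  classical
  have hcardVVp : Fintype.card (V ⊕ Vp) = 2 * Fintype.card V := by
    rw [Fintype.card_sum, hVp]; omega
  have hdisj : ∀ (S : Finset C) (T : Finset Cp),
      Disjoint (S.image (Sum.inl : C → C ⊕ Cp)) (T.image Sum.inr) := by
    intro S T
    rw [Finset.disjoint_left]
    rintro x hx hx'
    simp only [Finset.mem_image] at hx hx'
    obtain ⟨a, -, rfl⟩ := hx
    obtain ⟨b, -, hb⟩ := hx'
    cases hb
  constructor
  · rintro ⟨W, hWcard, hWJR⟩
    refine ⟨W.image Sum.inl ∪ Finset.univ.image Sum.inr, ?_, ?_⟩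
    · rw [Finset.card_union_of_disjoint (hdisj _ _),
        Finset.card_image_of_injective _ Sum.inl_injective,
        Finset.card_image_of_injective _ Sum.inr_injective, hWcard,
        Finset.card_univ, hCp]
      omega
    · intro B hBl hBr V' hV'size hcoh
      obtain ⟨c, hc⟩ := hcoh
      have hV'ne : V'.Nonempty := by
        rcases Finset.eq_empty_or_nonempty V' with h | h
        · exfalso; rw [h] at hV'size; simp [hcardVVp] at hV'size; omega
        · exact h
      cases c with
      | inr d =>
        obtain ⟨i, hi⟩ := hV'ne
        exact ⟨i, hi, ⟨Sum.inr d, Finset.mem_inter.mpr ⟨hc i hi,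
          Finset.mem_union_right _ (Finset.mem_image_of_mem _ (Finset.mem_univ d))⟩⟩⟩
      | inl c0 =>
        -- every voter in V' is an original voter
        have hsub : ∀ x ∈ V', ∃ i : V, x = Sum.inl i := by
          intro x hx
          cases x with
          | inl i => exact ⟨i, rfl⟩
          | inr j =>
            exfalso
            have := hBr j (hc _ hx)
            simp only [Finset.mem_image] at this
            obtain ⟨b, -, hb⟩ := this
            cases hb
        set V'' := Finset.univ.filter (fun i : V => Sum.inl i ∈ V') with hV''def
        have hV'eq : V' = V''.image Sum.inl := by
          ext x
          simp only [hV''def, Finset.mem_image, Finset.mem_filter, Finset.mem_univ, true_and]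
          constructor
          · intro hx
            obtain ⟨i, rfl⟩ := hsub x hx
            exact ⟨i, hx, rfl⟩
          · rintro ⟨i, hi, rfl⟩; exact hi
        have hV'card : V'.card = V''.card := by
          rw [hV'eq, Finset.card_image_of_injective _ Sum.inl_injective]
        have hsize : Fintype.card V ≤ k * V''.card := by
          rw [hcardVVp, hV'card] at hV'size
          have h2 : 2 * k * V''.card = 2 * (k * V''.card) := by ring
          omega
        have hcoh' : ∃ c : C, ∀ i ∈ V'', c ∈ A i := by
          refine ⟨c0, fun i hi => ?_⟩
          have hmem : Sum.inl i ∈ V' := by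
            rw [hV'eq]; exact Finset.mem_image_of_mem _ hi
          have := hc _ hmem
          rw [hBl i] at this
          simp only [Finset.mem_image] at this
          obtain ⟨a, ha, haeq⟩ := this
          rwa [← Sum.inl_injective haeq]
        obtain ⟨i, hi, a, ha⟩ := hWJR V'' hsize hcoh'
        rw [Finset.mem_inter] at ha
        refine ⟨Sum.inl i, by rw [hV'eq]; exact Finset.mem_image_of_mem _ hi,
          ⟨Sum.inl a, Finset.mem_inter.mpr ⟨?_, ?_⟩⟩⟩
        · rw [hBl i]; exact Finset.mem_image_of_mem _ ha.1
        · exact Finset.mem_union_left _ (Finset.mem_image_of_mem _ ha.2)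
  · rintro ⟨W', hW'card, hW'JR⟩
    -- All of Cp is in W'
    have hCpW : ∀ d : Cp, Sum.inr d ∈ W' := by
      intro d
      set B : (V ⊕ Vp) → Finset (C ⊕ Cp) := fun x =>
        match x with
        | Sum.inl i => (A i).image Sum.inl
        | Sum.inr _ => {Sum.inr d} with hBdef
      have hJR := hW'JR B (fun i => rfl) (by
        intro j
        simp only [hBdef, Finset.singleton_subset_iff, Finset.mem_image]
        exact ⟨d, Finset.mem_univ d, rfl⟩)
      have hsize : Fintype.card (V ⊕ Vp) ≤
          2 * k * (Finset.univ.image (Sum.inr : Vp → V ⊕ Vp)).card := by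
        rw [Finset.card_image_of_injective _ Sum.inr_injective, Finset.card_univ,
          hcardVVp, hVp]
        nlinarith
      have hcoh : ∃ c : C ⊕ Cp, ∀ x ∈ Finset.univ.image (Sum.inr : Vp → V ⊕ Vp), c ∈ B x := by
        refine ⟨Sum.inr d, fun x hx => ?_⟩
        simp only [Finset.mem_image] at hx
        obtain ⟨j, -, rfl⟩ := hx
        simp [hBdef]
      obtain ⟨x, hx, y, hy⟩ := hJR _ hsize hcoh
      simp only [Finset.mem_image] at hx
      obtain ⟨j, -, rfl⟩ := hx
      rw [Finset.mem_inter] at hy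
      have : y = Sum.inr d := by simpa [hBdef] using hy.1
      rw [← this]; exact hy.2
    set W : Finset C := Finset.univ.filter (fun c => Sum.inl c ∈ W') with hWdef
    have hW'eq : W' = W.image Sum.inl ∪ Finset.univ.image Sum.inr := by
      ext x
      cases x with
      | inl c =>
        simp only [Finset.mem_union, Finset.mem_image, hWdef, Finset.mem_filter,
          Finset.mem_univ, true_and]
        constructor
        · intro h; exact Or.inl ⟨c, h, rfl⟩
        · rintro (⟨a, ha, haeq⟩ | ⟨b, -, hb⟩)
          · rwa [← Sum.inl_injective haeq]
      | inr d =>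
        simp only [Finset.mem_union, Finset.mem_image]
        exact ⟨fun _ => Or.inr ⟨d, Finset.mem_univ d, rfl⟩, fun _ => hCpW d⟩
    have hWcard : W.card = r := by
      have := hW'card
      rw [hW'eq, Finset.card_union_of_disjoint (hdisj _ _),
        Finset.card_image_of_injective _ Sum.inl_injective,
        Finset.card_image_of_injective _ Sum.inr_injective,
        Finset.card_univ, hCp] at this
      omega
    refine ⟨W, hWcard, ?_⟩
    intro V'' hsize hcoh
    obtain ⟨c0, hc0⟩ := hcoh
    set B : (V ⊕ Vp) → Finset (C ⊕ Cp) := fun x =>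
      match x with
      | Sum.inl i => (A i).image Sum.inl
      | Sum.inr _ => ∅ with hBdef
    have hJR := hW'JR B (fun i => rfl) (fun j => Finset.empty_subset _)
    have hsize' : Fintype.card (V ⊕ Vp) ≤
        2 * k * (V''.image (Sum.inl : V → V ⊕ Vp)).card := by
      rw [Finset.card_image_of_injective _ Sum.inl_injective, hcardVVp]
      have h2 : 2 * k * V''.card = 2 * (k * V''.card) := by ring
      omega
    have hcoh' : ∃ c : C ⊕ Cp, ∀ x ∈ V''.image (Sum.inl : V → V ⊕ Vp), c ∈ B x := by
      refine ⟨Sum.inl c0, fun x hx => ?_⟩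
      simp only [Finset.mem_image] at hx
      obtain ⟨i, hi, rfl⟩ := hx
      simp only [hBdef]
      exact Finset.mem_image_of_mem _ (hc0 i hi)
    obtain ⟨x, hx, y, hy⟩ := hJR _ hsize' hcoh'
    simp only [Finset.mem_image] at hx
    obtain ⟨i, hi, rfl⟩ := hx
    rw [Finset.mem_inter] at hy
    have hy1 := hy.1
    simp only [hBdef, Finset.mem_image] at hy1
    obtain ⟨a, ha, rfl⟩ := hy1
    refine ⟨i, hi, ⟨a, Finset.mem_inter.mpr ⟨ha, ?_⟩⟩⟩
    simp only [hWdef, Finset.mem_filter, Finset.mem_univ, true_and]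
    exact hy.2
end

section
/- Lottery reduction for ExistsNecJR: let V be a finite set of n ≥ 1 voters with approval profile A : V → 2^C over a finite candidate set C, let k and r be integers with 1 ≤ r < k. Let V⁺ be a set of n new voters and C⁺ a set of 2k − r new candidates, disjoint from V and C respectively. In the extended election with voter set V ∪ V⁺ (2n voters), candidate set C ∪ C⁺, and parameter 2k, the plausible approval profiles are exactly those in which each original voter i ∈ V approves exactly A_i and each new voter in V⁺ approves exactly one candidate of C⁺ (a singleton {c} with c ∈ C⁺, chosen independently per voter). Then there exists a committee W ⊆ C with |W| = r satisfying JR with respect to (A_i)_{i∈V} and parameter k if and only if there exists a committee W' ⊆ C ∪ C⁺ with |W'| = 2k that satisfies JR (with respect to parameter 2k over the 2n voters) under every plausible approval profile of the extended election. -/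
/-- Lottery reduction for ExistsNecJR: extend the election
`(V, C, A, k)` by a set `Vp` of `n` new voters and a set `Cp` of `2k - r` new
candidates; in the extended election (with `2n` voters and parameter `2k`) the
plausible profiles are exactly those where each original voter approves exactly
`A i` and each new voter approves exactly one candidate of `Cp` (a singleton).
Then there is a size-`r` committee over `C` satisfying JR (parameter `k`) iff
there is a size-`2k` committee over `C ⊕ Cp` satisfying JR under every
plausible profile of the extended election. -/
theorem stmt_9 {V C Vp Cp : Type*}
    [Fintype V] [Fintype C] [DecidableEq C] [Fintype Vp] [Fintype Cp] [DecidableEq Cp]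
    (hn : 1 ≤ Fintype.card V)
    (k r : ℕ) (hr : 1 ≤ r) (hrk : r < k)
    (hVp : Fintype.card Vp = Fintype.card V)
    (hCp : Fintype.card Cp = 2 * k - r)
    (A : V → Finset C) :
    (∃ W : Finset C, W.card = r ∧ satisfiesJR A k W) ↔
      (∃ W' : Finset (C ⊕ Cp), W'.card = 2 * k ∧
        ∀ B : (V ⊕ Vp) → Finset (C ⊕ Cp),
          (∀ i : V, B (Sum.inl i) = (A i).image Sum.inl) →
          (∀ j : Vp, ∃ c : Cp, B (Sum.inr j) = {Sum.inr c}) →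
          satisfiesJR B (2 * k) W') := by
  classical
  have hCpcard : 0 < Fintype.card Cp := by omega
  have hVpcard : 1 ≤ Fintype.card Vp := by omega
  constructor
  · rintro ⟨W, hWcard, hJR⟩
    refine ⟨W.disjSum Finset.univ, ?_, ?_⟩
    · rw [Finset.card_disjSum, hWcard, Finset.card_univ, hCp]; omega
    · intro B hB1 hB2 V' hVcard ⟨c, hc⟩
      by_cases hre : ∃ j : Vp, Sum.inr j ∈ V'
      · obtain ⟨j, hj⟩ := hre
        obtain ⟨c', hc'⟩ := hB2 j
        refine ⟨Sum.inr j, hj, Sum.inr c', ?_⟩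
        rw [Finset.mem_inter, hc']
        simp
      · -- all members of V' are left voters
        push_neg at hre
        have hVR : V'.toRight = ∅ := by
          ext j; simp [hre j]
        have hcards : V'.toLeft.card = V'.card := by
          have := Finset.card_toLeft_add_card_toRight (u := V')
          rw [hVR] at this; simpa using this
        have hsum := Fintype.card_sum (α := V) (β := Vp)
        have hVL : 1 ≤ V'.toLeft.card := by
          by_contra h
          have h0 : V'.card = 0 := by omega
          rw [h0, Nat.mul_zero] at hVcard
          omega
        obtain ⟨i0, hi0⟩ := Finset.card_pos.mp hVL
        have hi0' : Sum.inl i0 ∈ V' := Finset.mem_toLeft.mp hi0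
        have hcA := hc _ hi0'
        rw [hB1 i0] at hcA
        obtain ⟨c0, _, rfl⟩ := Finset.mem_image.mp hcA
        obtain ⟨i, hi, x, hx⟩ := hJR V'.toLeft (by
          rw [← hcards] at hVcard
          have h2 : 2 * k * V'.toLeft.card = 2 * (k * V'.toLeft.card) := by ring
          rw [h2] at hVcard
          omega) ⟨c0, by
            intro i hi
            have hmem := hc _ (Finset.mem_toLeft.mp hi)
            rw [hB1 i] at hmem
            obtain ⟨c1, hc1, heq⟩ := Finset.mem_image.mp hmem
            exact Sum.inl_injective heq ▸ hc1⟩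
        refine ⟨Sum.inl i, Finset.mem_toLeft.mp hi, Sum.inl x, ?_⟩
        rw [Finset.mem_inter] at hx ⊢
        rw [hB1 i]
        exact ⟨Finset.mem_image_of_mem _ hx.1, by simp [hx.2]⟩
  · rintro ⟨W', hW'card, hJR'⟩
    obtain ⟨cstar⟩ := Fintype.card_pos_iff.mp hCpcard
    -- the standard plausible profile
    set B0 : (V ⊕ Vp) → Finset (C ⊕ Cp) :=
      Sum.elim (fun i => (A i).image Sum.inl) (fun _ => {Sum.inr cstar}) with hB0
    -- every Cp candidate is in W'
    have hCpW : ∀ c : Cp, Sum.inr c ∈ W' := by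
      intro c
      by_contra hc
      set B : (V ⊕ Vp) → Finset (C ⊕ Cp) :=
        Sum.elim (fun i => (A i).image Sum.inl) (fun _ => {Sum.inr c}) with hB
      obtain ⟨i, hi, x, hx⟩ := hJR' B (fun i => rfl) (fun j => ⟨c, rfl⟩)
        (Finset.univ.image Sum.inr)
        (by
          rw [Finset.card_image_of_injective _ Sum.inr_injective, Finset.card_univ]
          have := Fintype.card_sum (α := V) (β := Vp)
          nlinarith)
        ⟨Sum.inr c, by
          intro i hi
          obtain ⟨j, _, rfl⟩ := Finset.mem_image.mp hi
          simp [hB]⟩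
      obtain ⟨j, _, rfl⟩ := Finset.mem_image.mp hi
      rw [Finset.mem_inter] at hx
      have : x = Sum.inr c := by simpa [hB] using hx.1
      exact hc (this ▸ hx.2)
    have hright : W'.toRight = Finset.univ := by
      ext c; simp [hCpW c]
    have hleft : W'.toLeft.card = r := by
      have := Finset.card_toLeft_add_card_toRight (u := W')
      rw [hright, Finset.card_univ, hCp, hW'card] at this
      omega
    refine ⟨W'.toLeft, hleft, ?_⟩
    intro V0 hV0card ⟨c, hc⟩
    obtain ⟨i, hi, x, hx⟩ := hJR' B0 (fun i => rfl) (fun j => ⟨cstar, rfl⟩)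
      (V0.image Sum.inl)
      (by
        rw [Finset.card_image_of_injective _ Sum.inl_injective, Fintype.card_sum, hVp]
        calc Fintype.card V + Fintype.card V ≤ k * V0.card + k * V0.card := by omega
          _ = 2 * k * V0.card := by ring)
      ⟨Sum.inl c, by
        intro i hi
        obtain ⟨i0, hi0, rfl⟩ := Finset.mem_image.mp hi
        simp only [hB0, Sum.elim_inl, Finset.mem_image]
        exact ⟨c, hc _ hi0, rfl⟩⟩
    obtain ⟨i0, hi0, rfl⟩ := Finset.mem_image.mp hi
    rw [Finset.mem_inter] at hx
    have hx1 : x ∈ (A i0).image Sum.inl := by simpa [hB0] using hx.1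
    obtain ⟨a, ha, rfl⟩ := Finset.mem_image.mp hx1
    exact ⟨i0, hi0, a, Finset.mem_inter.mpr ⟨ha, Finset.mem_toLeft.mpr hx.2⟩⟩
end

section
/- Two-profile Joint-Probability reduction for ExistsNecJR: let V be a finite set of n ≥ 1 voters with approval profile A : V → 2^C over a finite candidate set C, let k and r be integers with 1 ≤ r < k, and assume k divides n and r is even (so 2k − r is even). Let V⁺ be a set of n new voters and C⁺ = {c⁺_1, …, c⁺_{2k−r}} a set of 2k − r new candidates, disjoint from V and C. Define two approval profiles 𝒜₁ and 𝒜₂ on the extended voter set V ∪ V⁺: in both, each original voter i ∈ V approves exactly A_i; in 𝒜₁, for each j ∈ {1, …, (2k−r)/2} a designated block of exactly n/k new voters (the blocks being pairwise disjoint) approves exactly {c⁺_j}, and all remaining new voters approve the empty set; in 𝒜₂, likewise for each j ∈ {(2k−r)/2 + 1, …, 2k−r}, with pairwise disjoint blocks of exactly n/k new voters approving {c⁺_j} and all remaining new voters approving the empty set. Then there exists a committee W ⊆ C with |W| = r satisfying JR with respect to (A_i)_{i∈V} and parameter k if and only if there exists a committee W' ⊆ C ∪ C⁺ with |W'| = 2k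 that satisfies JR (with respect to parameter 2k over the 2n voters) under both 𝒜₁ and 𝒜₂. (This is the correctness of the reduction showing ExistsNecJR is NP-complete for the Joint Probability model even with only two plausible approval profiles.) -/
-- forward helper
lemma jr_fwd {V C Vp : Type*} [Fintype V] [Fintype C] [DecidableEq C]
    [Fintype Vp] [DecidableEq Vp]
    (k r : ℕ)
    (hVp : Fintype.card Vp = Fintype.card V)
    (hn : 1 ≤ Fintype.card V)
    (A : V → Finset C) (W : Finset C)
    (hWJR : satisfiesJR A k W)
    (B : (V ⊕ Vp) → Finset (C ⊕ Fin (2 * k - r)))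
    (hBV : ∀ i : V, B (Sum.inl i) = (A i).image Sum.inl)
    (hBno : ∀ v : Vp, ∀ c : C, Sum.inl c ∉ B (Sum.inr v)) :
    satisfiesJR B (2 * k) (W.image Sum.inl ∪ Finset.univ.image Sum.inr) := by
  classical
  intro V' hV' hcom
  obtain ⟨c, hc⟩ := hcom
  have hcardVVp : Fintype.card (V ⊕ Vp) = 2 * Fintype.card V := by
    simp [Fintype.card_sum, hVp]; ring
  rw [hcardVVp] at hV'
  have hV'ne : V'.Nonempty := by
    rcases V'.eq_empty_or_nonempty with h | h
    · exfalso; rw [h] at hV'; simp at hV'; omega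
    · exact h
  match c with
  | Sum.inr j =>
      obtain ⟨i, hi⟩ := hV'ne
      exact ⟨i, hi, ⟨Sum.inr j, Finset.mem_inter.mpr ⟨hc i hi, by simp⟩⟩⟩
  | Sum.inl c₀ =>
      set V'' : Finset V := Finset.univ.filter (fun i => Sum.inl i ∈ V') with hV''def
      have hsub : V' = V''.image Sum.inl := by
        ext x
        match x with
        | Sum.inl i => simp [hV''def]
        | Sum.inr v =>
          constructor
          · intro hx
            exact absurd (hc _ hx) (hBno v c₀)
          · intro hx
            simp at hx
      have hcard'' : V''.card = V'.card := by
        rw [hsub, Finset.card_image_of_injective _ Sum.inl_injective]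
      have hthr : Fintype.card V ≤ k * V''.card := by
        have h2 : 2 * k * V'.card = 2 * (k * V''.card) := by rw [hcard'']; ring
        omega
      have hcom' : ∀ i ∈ V'', c₀ ∈ A i := by
        intro i hi
        have := hc (Sum.inl i) (by rw [hsub]; exact Finset.mem_image_of_mem _ hi)
        rw [hBV] at this
        simp at this
        exact this
      obtain ⟨i, hi, c₁, hc₁⟩ := hWJR V'' hthr ⟨c₀, hcom'⟩
      simp only [Finset.mem_inter] at hc₁
      refine ⟨Sum.inl i, by rw [hsub]; exact Finset.mem_image_of_mem _ hi,
        ⟨Sum.inl c₁, Finset.mem_inter.mpr ⟨?_, ?_⟩⟩⟩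
      · rw [hBV]; exact Finset.mem_image_of_mem _ hc₁.1
      · exact Finset.mem_union_left _ (Finset.mem_image_of_mem _ hc₁.2)

-- backward helper: each blocked candidate must be in W'
lemma block_mem {V C Vp : Type*} [Fintype V] [Fintype C] [DecidableEq C]
    [Fintype Vp] [DecidableEq Vp]
    (k r : ℕ)
    (hdvd : k ∣ Fintype.card V)
    (hVp : Fintype.card Vp = Fintype.card V)
    (B : (V ⊕ Vp) → Finset (C ⊕ Fin (2 * k - r)))
    (W' : Finset (C ⊕ Fin (2 * k - r)))
    (hJR : satisfiesJR B (2 * k) W')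
    (j : Fin (2 * k - r))
    (hblock : (Finset.univ.filter (fun v : Vp => B (Sum.inr v) = {Sum.inr j})).card
        = Fintype.card V / k) :
    Sum.inr j ∈ W' := by
  classical
  set S : Finset Vp := Finset.univ.filter (fun v : Vp => B (Sum.inr v) = {Sum.inr j})
    with hSdef
  have hS : ∀ v ∈ S, B (Sum.inr v) = {Sum.inr j} := by
    intro v hv; simpa [hSdef] using hv
  set V' : Finset (V ⊕ Vp) := S.image Sum.inr with hV'def
  have hV'card : V'.card = Fintype.card V / k := by
    rw [hV'def, Finset.card_image_of_injective _ Sum.inr_injective, hblock]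
  have hkn : k * (Fintype.card V / k) = Fintype.card V := Nat.mul_div_cancel' hdvd
  have hthr : Fintype.card (V ⊕ Vp) ≤ 2 * k * V'.card := by
    have hcardVVp : Fintype.card (V ⊕ Vp) = 2 * Fintype.card V := by
      simp [Fintype.card_sum, hVp]; ring
    rw [hcardVVp, hV'card]
    have : 2 * k * (Fintype.card V / k) = 2 * (k * (Fintype.card V / k)) := by ring
    omega
  have hcom : ∀ i ∈ V', Sum.inr j ∈ B i := by
    intro i hi
    rw [hV'def] at hi
    obtain ⟨v, hv, rfl⟩ := Finset.mem_image.mp hi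
    rw [hS v hv]; simp
  obtain ⟨i, hi, x, hx⟩ := hJR V' hthr ⟨Sum.inr j, hcom⟩
  rw [hV'def] at hi
  obtain ⟨v, hv, rfl⟩ := Finset.mem_image.mp hi
  rw [Finset.mem_inter, hS v hv, Finset.mem_singleton] at hx
  rw [← hx.1]; exact hx.2

/-- two-profile Joint-Probability reduction for ExistsNecJR:
with `k ∣ n`, `r` even, `1 ≤ r < k`, extend the election by `n` new voters
(`Vp`) and `2k - r` new candidates (indexed by `Fin (2k - r)`).  The profile
`B₁` gives each original voter its approval set `A i`; each of the candidates
`j` with `j < (2k - r)/2` is approved (as a singleton) by a block of exactly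
`n/k` new voters, and all remaining new voters approve the empty set.  `B₂` is
analogous for the candidates `j` with `(2k - r)/2 ≤ j`.  Then there is a
size-`r` committee over `C` satisfying JR (parameter `k`) iff there is a
size-`2k` committee over `C ⊕ Fin (2k - r)` satisfying JR (parameter `2k`,
over the `2n` voters) under both `B₁` and `B₂`. -/
theorem stmt_10 {V C Vp : Type*}
    [Fintype V] [Fintype C] [DecidableEq C] [Fintype Vp] [DecidableEq Vp]
    (hn : 1 ≤ Fintype.card V)
    (k r : ℕ) (hr : 1 ≤ r) (hrk : r < k)
    (hdvd : k ∣ Fintype.card V) (hreven : 2 ∣ r)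
    (hVp : Fintype.card Vp = Fintype.card V)
    (A : V → Finset C)
    (B₁ B₂ : (V ⊕ Vp) → Finset (C ⊕ Fin (2 * k - r)))
    (hB₁V : ∀ i : V, B₁ (Sum.inl i) = (A i).image Sum.inl)
    (hB₂V : ∀ i : V, B₂ (Sum.inl i) = (A i).image Sum.inl)
    (hB₁form : ∀ v : Vp, B₁ (Sum.inr v) = ∅ ∨
      ∃ j : Fin (2 * k - r), j.val < (2 * k - r) / 2 ∧ B₁ (Sum.inr v) = {Sum.inr j})
    (hB₁block : ∀ j : Fin (2 * k - r), j.val < (2 * k - r) / 2 →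
      (Finset.univ.filter (fun v : Vp => B₁ (Sum.inr v) = {Sum.inr j})).card
        = Fintype.card V / k)
    (hB₂form : ∀ v : Vp, B₂ (Sum.inr v) = ∅ ∨
      ∃ j : Fin (2 * k - r), (2 * k - r) / 2 ≤ j.val ∧ B₂ (Sum.inr v) = {Sum.inr j})
    (hB₂block : ∀ j : Fin (2 * k - r), (2 * k - r) / 2 ≤ j.val →
      (Finset.univ.filter (fun v : Vp => B₂ (Sum.inr v) = {Sum.inr j})).card
        = Fintype.card V / k) :
    (∃ W : Finset C, W.card = r ∧ satisfiesJR A k W) ↔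
      (∃ W' : Finset (C ⊕ Fin (2 * k - r)), W'.card = 2 * k ∧
        satisfiesJR B₁ (2 * k) W' ∧ satisfiesJR B₂ (2 * k) W') := by
  classical
  constructor
  · rintro ⟨W, hWcard, hWJR⟩
    refine ⟨W.image Sum.inl ∪ Finset.univ.image Sum.inr, ?_, ?_, ?_⟩
    · rw [Finset.card_union_of_disjoint (by simp [Finset.disjoint_left]),
        Finset.card_image_of_injective _ Sum.inl_injective,
        Finset.card_image_of_injective _ Sum.inr_injective,
        Finset.card_univ, Fintype.card_fin, hWcard]
      omega
    · refine jr_fwd k r hVp hn A W hWJR B₁ hB₁V ?_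
      intro v c hmem
      rcases hB₁form v with h | ⟨j, _, h⟩ <;> rw [h] at hmem <;> simp at hmem
    · refine jr_fwd k r hVp hn A W hWJR B₂ hB₂V ?_
      intro v c hmem
      rcases hB₂form v with h | ⟨j, _, h⟩ <;> rw [h] at hmem <;> simp at hmem
  · rintro ⟨W', hW'card, hJR₁, hJR₂⟩
    have hallinr : ∀ j : Fin (2 * k - r), Sum.inr j ∈ W' := by
      intro j
      by_cases hj : j.val < (2 * k - r) / 2
      · exact block_mem k r hdvd hVp B₁ W' hJR₁ j (hB₁block j hj)
      · exact block_mem k r hdvd hVp B₂ W' hJR₂ j (hB₂block j (le_of_not_gt hj))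
    set Wl : Finset C := Finset.univ.filter (fun c : C => Sum.inl c ∈ W') with hWldef
    set R : Finset (C ⊕ Fin (2 * k - r)) := Finset.univ.image Sum.inr with hRdef
    have hRsub : R ⊆ W' := by
      intro x hx
      rw [hRdef] at hx
      obtain ⟨j, _, rfl⟩ := Finset.mem_image.mp hx
      exact hallinr j
    have hRcard : R.card = 2 * k - r := by
      rw [hRdef, Finset.card_image_of_injective _ Sum.inr_injective,
        Finset.card_univ, Fintype.card_fin]
    have hdiff : W' \ R = Wl.image Sum.inl := by
      ext x
      match x with
      | Sum.inl c => simp [hWldef, hRdef]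
      | Sum.inr j =>
        simp only [Finset.mem_sdiff, hRdef]
        constructor
        · rintro ⟨_, h⟩; exact absurd (Finset.mem_image_of_mem _ (Finset.mem_univ j)) h
        · intro h; simp at h
    have hWlcard : Wl.card = r := by
      have h1 : (W' \ R).card = W'.card - R.card := Finset.card_sdiff_of_subset hRsub
      rw [hdiff, Finset.card_image_of_injective _ Sum.inl_injective] at h1
      rw [h1, hW'card, hRcard]
      omega
    refine ⟨Wl, hWlcard, ?_⟩
    intro V'' hthr ⟨c, hc⟩
    set V' : Finset (V ⊕ Vp) := V''.image Sum.inl with hV'def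
    have hthr' : Fintype.card (V ⊕ Vp) ≤ 2 * k * V'.card := by
      have hcardVVp : Fintype.card (V ⊕ Vp) = 2 * Fintype.card V := by
        simp [Fintype.card_sum, hVp]; ring
      rw [hcardVVp, hV'def, Finset.card_image_of_injective _ Sum.inl_injective]
      have : 2 * k * V''.card = 2 * (k * V''.card) := by ring
      omega
    have hcom : ∀ i ∈ V', Sum.inl c ∈ B₁ i := by
      intro i hi
      rw [hV'def] at hi
      obtain ⟨i₀, hi₀, rfl⟩ := Finset.mem_image.mp hi
      rw [hB₁V]
      exact Finset.mem_image_of_mem _ (hc i₀ hi₀)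
    obtain ⟨i, hi, x, hx⟩ := hJR₁ V' hthr' ⟨Sum.inl c, hcom⟩
    rw [hV'def] at hi
    obtain ⟨i₀, hi₀, rfl⟩ := Finset.mem_image.mp hi
    rw [Finset.mem_inter, hB₁V] at hx
    obtain ⟨c₁, hc₁, rfl⟩ := Finset.mem_image.mp hx.1
    refine ⟨i₀, hi₀, ⟨c₁, Finset.mem_inter.mpr ⟨hc₁, ?_⟩⟩⟩
    simp [hWldef]
    exact hx.2
end

section
/- Vertex-cover correspondence for JR-counting: let G be a simple graph on vertex set V = {1, …, n} with n even and n ≥ 2, and set k = n/2. The voters are the n vertices. The candidates are one candidate c_e for each edge e of G, together with k additional candidates c⁺_1, …, c⁺_k, and the committee is W = {c⁺_1, …, c⁺_k} (so |W| = k). For each subset S ⊆ V define the approval profile 𝒜^S in which voter i approves the set {c_e : i is an endpoint of edge e} ∪ ({c⁺_1} if i ∈ S, and nothing from {c⁺_1, …, c⁺_k} otherwise). Then W satisfies JR with respect to 𝒜^S and parameter k if and only if S is a vertex cover of G (i.e., every edge of G has at least one endpoint in S). (This one-to-one correspondence between vertex covers and plausible 3VA approval profiles for which W satisfies JR is the core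 of the #P-completeness proof for JR-Probability in the 3VA model.) -/
/-- vertex-cover correspondence for JR-counting: let `G` be a
simple graph on an even number `n ≥ 2` of vertices, `k = n / 2`.  The voters
are the vertices; the candidates are one candidate per edge of `G` together
with `k` extra candidates, and `W` consists of the `k` extra candidates.  For
`S ⊆ V`, in the profile `𝒜^S` each voter approves the candidates of its
incident edges, plus the first extra candidate `c⁺₁` iff it belongs to `S`
(and no other extra candidate).  Then `W` satisfies JR with respect to `𝒜^S`
and parameter `k` iff `S` is a vertex cover of `G`. -/
theorem stmt_11 {V : Type*} [Fintype V] [DecidableEq V]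
    (G : SimpleGraph V) [DecidableRel G.Adj]
    (h2 : 2 ≤ Fintype.card V) (heven : 2 ∣ Fintype.card V)
    (S : Finset V) :
    satisfiesJR
      (fun i : V =>
        ((G.edgeFinset.attach.filter (fun e => i ∈ e.1)).image
            (Sum.inl : {e : Sym2 V // e ∈ G.edgeFinset} →
              {e : Sym2 V // e ∈ G.edgeFinset} ⊕ Fin (Fintype.card V / 2))) ∪
          (if i ∈ S then
            {Sum.inr (⟨0, Nat.div_pos h2 (by norm_num)⟩ : Fin (Fintype.card V / 2))}
          else ∅))
      (Fintype.card V / 2)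
      ((Finset.univ : Finset (Fin (Fintype.card V / 2))).image Sum.inr) ↔
      ∀ e ∈ G.edgeFinset, ∃ v ∈ S, v ∈ e := by
  classical
  have hkpos : 0 < Fintype.card V / 2 := Nat.div_pos h2 (by norm_num)
  have hnk : 2 * (Fintype.card V / 2) = Fintype.card V := Nat.mul_div_cancel' heven
  set A : V → Finset ({e : Sym2 V // e ∈ G.edgeFinset} ⊕ Fin (Fintype.card V / 2)) :=
      (fun i : V =>
        ((G.edgeFinset.attach.filter (fun e => i ∈ e.1)).image
            (Sum.inl : {e : Sym2 V // e ∈ G.edgeFinset} →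
              {e : Sym2 V // e ∈ G.edgeFinset} ⊕ Fin (Fintype.card V / 2))) ∪
          (if i ∈ S then
            {Sum.inr (⟨0, Nat.div_pos h2 (by norm_num)⟩ : Fin (Fintype.card V / 2))}
          else ∅)) with hA
  set W : Finset ({e : Sym2 V // e ∈ G.edgeFinset} ⊕ Fin (Fintype.card V / 2)) :=
      ((Finset.univ : Finset (Fin (Fintype.card V / 2))).image Sum.inr) with hW
  have hmem : ∀ i : V, (A i ∩ W).Nonempty ↔ i ∈ S := by
    intro i
    constructor
    · rintro ⟨x, hx⟩
      rw [Finset.mem_inter] at hx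
      obtain ⟨hx1, hx2⟩ := hx
      rw [hW, Finset.mem_image] at hx2
      obtain ⟨j, -, rfl⟩ := hx2
      rw [hA] at hx1
      simp only [Finset.mem_union, Finset.mem_image] at hx1
      rcases hx1 with ⟨e, -, he⟩ | h
      · exact absurd he (by simp)
      · by_contra hiS
        rw [if_neg hiS] at h
        simp at h
    · intro hiS
      refine ⟨Sum.inr ⟨0, hkpos⟩, ?_⟩
      rw [Finset.mem_inter]
      constructor
      · rw [hA]; simp [hiS]
      · rw [hW]; simp
  have hedge : ∀ (i : V) (e : Sym2 V) (he : e ∈ G.edgeFinset),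
      Sum.inl ⟨e, he⟩ ∈ A i ↔ i ∈ e := by
    intro i e he
    rw [hA]
    simp only [Finset.mem_union, Finset.mem_image, Finset.mem_filter, Finset.mem_attach,
      true_and]
    constructor
    · rintro (⟨e', he', heq⟩ | h)
      · obtain rfl : e' = ⟨e, he⟩ := Sum.inl.inj heq
        exact he'
      · split_ifs at h <;> simp_all
    · intro hie
      exact Or.inl ⟨⟨e, he⟩, hie, rfl⟩
  constructor
  · intro hJR e he
    induction e using Sym2.ind with
    | _ u v =>
      have hadj : G.Adj u v := by rwa [SimpleGraph.mem_edgeFinset, SimpleGraph.mem_edgeSet] at he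
      have hne : u ≠ v := hadj.ne
      have hcard : ({u, v} : Finset V).card = 2 := by
        rw [Finset.card_insert_of_notMem (by simpa using hne), Finset.card_singleton]
      obtain ⟨i, hiV, hni⟩ := hJR {u, v} (by rw [hcard]; omega)
        ⟨Sum.inl ⟨s(u, v), he⟩, by
          intro i hi
          rw [hedge i s(u, v) he]
          rcases Finset.mem_insert.mp hi with rfl | h
          · exact Sym2.mem_mk_left _ _
          · rw [Finset.mem_singleton] at h
            subst h
            exact Sym2.mem_mk_right _ _⟩
      refine ⟨i, (hmem i).mp hni, ?_⟩
      rcases Finset.mem_insert.mp hiV with rfl | h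
      · exact Sym2.mem_mk_left _ _
      · rw [Finset.mem_singleton] at h
        subst h
        exact Sym2.mem_mk_right _ _
  · intro hcov V' hV' hcommon
    have hV'2 : 2 ≤ V'.card := by
      by_contra hlt
      push_neg at hlt
      have h1 : Fintype.card V / 2 * V'.card ≤ Fintype.card V / 2 * 1 :=
        Nat.mul_le_mul_left _ (by omega)
      omega
    obtain ⟨c, hc⟩ := hcommon
    match c with
    | Sum.inr j =>
      obtain ⟨i, hi⟩ := (Finset.card_pos (s := V')).mp (by omega)
      have hci := hc i hi
      rw [hA] at hci
      simp only [Finset.mem_union, Finset.mem_image] at hci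
      rcases hci with ⟨e, -, he⟩ | h
      · exact absurd he (by simp)
      · refine ⟨i, hi, (hmem i).mpr ?_⟩
        by_contra hiS
        rw [if_neg hiS] at h
        simp at h
    | Sum.inl e =>
      obtain ⟨e, he⟩ := e
      have hiine : ∀ i ∈ V', i ∈ e := by
        intro i hi
        exact (hedge i e he).mp (hc i hi)
      induction e using Sym2.ind with
      | _ u v =>
        have hadj : G.Adj u v := by
          rwa [SimpleGraph.mem_edgeFinset, SimpleGraph.mem_edgeSet] at he
        have hne : u ≠ v := hadj.ne
        have hsub : V' ⊆ {u, v} := by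
          intro i hi
          rcases Sym2.mem_iff.mp (hiine i hi) with rfl | rfl
          · exact Finset.mem_insert_self _ _
          · exact Finset.mem_insert_of_mem (Finset.mem_singleton_self _)
        have hcard : ({u, v} : Finset V).card = 2 := by
          rw [Finset.card_insert_of_notMem (by simpa using hne), Finset.card_singleton]
        have hVeq : V' = {u, v} := Finset.eq_of_subset_of_card_le hsub (by omega)
        obtain ⟨w, hwS, hwe⟩ := hcov s(u, v) he
        have hwV' : w ∈ V' := by
          rw [hVeq]
          rcases Sym2.mem_iff.mp hwe with rfl | rfl
          · exact Finset.mem_insert_self _ _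
          · exact Finset.mem_insert_of_mem (Finset.mem_singleton_self _)
        exact ⟨w, hwV', (hmem w).mpr hwS⟩
end

section
/- Candidate-Probability reduction for ExistsNecEJR: let V be a finite set of n ≥ 1 voters with approval profile A : V → 2^C over a finite candidate set C, let k ≥ 1, and let W ⊆ C with |W| = k. Let V⁺ be a set of n new voters and C⁺ a set of k new candidates, disjoint from V and C respectively. In the extended election with voter set V ∪ V⁺ (2n voters), candidate set C ∪ C⁺, and parameter 2k, the plausible approval profiles are exactly those in which each original voter i ∈ V approves exactly A_i and each new voter in V⁺ approves an arbitrary subset of W ∪ C⁺. Then W satisfies EJR with respect to (A_i)_{i∈V} and parameter k if and only if there exists a committee W' ⊆ C ∪ C⁺ with |W'| = 2k that satisfies EJR (with respect to parameter 2k over the 2n voters) under every plausible approval profile of the extended election; moreover when this holds, W' = W ∪ C⁺ is such a committee. -/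
/-- A committee `W` satisfies extended justified representation (EJR) with
respect to the approval profile `A` and parameter `k`: for every `ℓ ≥ 1` and
every `ℓ`-cohesive group `V'` (i.e. `k * |V'| ≥ ℓ * n` and the voters of `V'`
commonly approve at least `ℓ` candidates), some voter of `V'` approves at
least `ℓ` members of `W`. -/
def satisfiesEJR {V C : Type*} [Fintype V] [Fintype C] [DecidableEq C]
    (A : V → Finset C) (k : ℕ) (W : Finset C) : Prop :=
  ∀ ℓ : ℕ, 1 ≤ ℓ → ∀ V' : Finset V,
    ℓ * Fintype.card V ≤ k * V'.card →
    ℓ ≤ (Finset.univ.filter (fun c : C => ∀ i ∈ V', c ∈ A i)).card →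
    ∃ i ∈ V', ℓ ≤ (A i ∩ W).card


section Aux
variable {V C Vp Cp : Type*}
    [Fintype V] [Fintype C] [DecidableEq C] [Fintype Vp] [Fintype Cp] [DecidableEq Cp]

lemma aux_inter_img (A W : Finset C) :
    (A.image (Sum.inl : C → C ⊕ Cp)) ∩
      (W.image Sum.inl ∪ Finset.univ.image (Sum.inr : Cp → C ⊕ Cp))
    = (A ∩ W).image Sum.inl := by
  ext x
  cases x <;> simp

lemma aux_forward (hn : 1 ≤ Fintype.card V) (k : ℕ) (hk : 1 ≤ k)
    (hVp : Fintype.card Vp = Fintype.card V)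
    (A : V → Finset C) (W : Finset C)
    (hEJR : satisfiesEJR A k W)
    (B : (V ⊕ Vp) → Finset (C ⊕ Cp))
    (hB1 : ∀ i : V, B (Sum.inl i) = (A i).image Sum.inl)
    (hB2 : ∀ j : Vp, B (Sum.inr j) ⊆
      W.image Sum.inl ∪ Finset.univ.image (Sum.inr : Cp → C ⊕ Cp)) :
    satisfiesEJR B (2 * k)
      (W.image Sum.inl ∪ Finset.univ.image (Sum.inr : Cp → C ⊕ Cp)) := by
  classical
  intro ℓ hℓ V'' hcard hcommon
  by_cases hj : ∃ j : Vp, Sum.inr j ∈ V''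
  · obtain ⟨j, hjmem⟩ := hj
    refine ⟨Sum.inr j, hjmem, le_trans hcommon (Finset.card_le_card ?_)⟩
    intro c hc
    simp only [Finset.mem_filter, Finset.mem_univ, true_and] at hc
    exact Finset.mem_inter.2 ⟨hc _ hjmem, hB2 j (hc _ hjmem)⟩
  · push_neg at hj
    set V' : Finset V := Finset.univ.filter (fun i => Sum.inl i ∈ V'') with hV'
    have hVV' : V'' = V'.image Sum.inl := by
      ext x
      cases x with
      | inl i => simp [hV']
      | inr j => simp [hV', hj j]
    have hcardeq : V''.card = V'.card := by
      rw [hVV', Finset.card_image_of_injective _ Sum.inl_injective]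
    have hcoh : ℓ * Fintype.card V ≤ k * V'.card := by
      have h2 : 2 * (ℓ * Fintype.card V) ≤ 2 * (k * V'.card) := by
        calc 2 * (ℓ * Fintype.card V) = ℓ * Fintype.card (V ⊕ Vp) := by
              rw [Fintype.card_sum, hVp]; ring
          _ ≤ 2 * k * V''.card := hcard
          _ = 2 * (k * V'.card) := by rw [hcardeq]; ring
      exact Nat.le_of_mul_le_mul_left h2 (by norm_num)
    have hV'ne : V'.Nonempty := by
      rw [← Finset.card_pos]
      by_contra h
      push_neg at h
      interval_cases h' : V'.card
      · have : 0 < ℓ * Fintype.card V := Nat.mul_pos hℓ hn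
        omega
    have hcomA : ℓ ≤ (Finset.univ.filter (fun c : C => ∀ i ∈ V', c ∈ A i)).card := by
      refine le_trans hcommon (le_trans (Finset.card_le_card ?_)
        (le_of_eq (Finset.card_image_of_injective
          (Finset.univ.filter (fun c : C => ∀ i ∈ V', c ∈ A i)) Sum.inl_injective)))
      intro c' hc'
      simp only [Finset.mem_filter, Finset.mem_univ, true_and] at hc'
      obtain ⟨i0, hi0⟩ := hV'ne
      have hi0' : Sum.inl i0 ∈ V'' := by
        rw [hV'] at hi0; simpa using hi0
      have hc0 := hc' _ hi0'
      rw [hB1] at hc0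
      obtain ⟨c, hcA, rfl⟩ := Finset.mem_image.1 hc0
      refine Finset.mem_image.2 ⟨c, ?_, rfl⟩
      simp only [Finset.mem_filter, Finset.mem_univ, true_and]
      intro i hi
      have hmem : Sum.inl i ∈ V'' := by rw [hV'] at hi; simpa using hi
      have hc1 := hc' _ hmem
      rw [hB1] at hc1
      obtain ⟨d, hd, hde⟩ := Finset.mem_image.1 hc1
      rwa [Sum.inl_injective hde] at hd
    obtain ⟨i, hiV', hicount⟩ := hEJR ℓ hℓ V' hcoh (by convert hcomA using 2; exact Finset.filter_congr_decidable _ _ _)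
    refine ⟨Sum.inl i, ?_, ?_⟩
    · rw [hV'] at hiV'; simpa using hiV'
    · rw [hB1, aux_inter_img, Finset.card_image_of_injective _ Sum.inl_injective]
      exact hicount

end Aux

section Aux2
variable {V C Vp Cp : Type*}
    [Fintype V] [Fintype C] [DecidableEq C] [Fintype Vp] [Fintype Cp] [DecidableEq Cp]

set_option maxHeartbeats 1000000 in
lemma aux_backward (hn : 1 ≤ Fintype.card V) (k : ℕ) (hk : 1 ≤ k)
    (hVp : Fintype.card Vp = Fintype.card V) (hCp : Fintype.card Cp = k)
    (A : V → Finset C) (W : Finset C) (hW : W.card = k)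
    (W' : Finset (C ⊕ Cp)) (hW'card : W'.card = 2 * k)
    (hW' : ∀ B : (V ⊕ Vp) → Finset (C ⊕ Cp),
      (∀ i : V, B (Sum.inl i) = (A i).image Sum.inl) →
      (∀ j : Vp, B (Sum.inr j) ⊆
        W.image Sum.inl ∪ Finset.univ.image (Sum.inr : Cp → C ⊕ Cp)) →
      satisfiesEJR B (2 * k) W') :
    satisfiesEJR A k W := by
  classical
  set Wp : Finset (C ⊕ Cp) :=
    W.image Sum.inl ∪ Finset.univ.image (Sum.inr : Cp → C ⊕ Cp) with hWp
  have hdisj : Disjoint (W.image (Sum.inl : C → C ⊕ Cp))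
      (Finset.univ.image (Sum.inr : Cp → C ⊕ Cp)) := by
    simp [Finset.disjoint_left]
  have hWpcard : Wp.card = 2 * k := by
    rw [hWp, Finset.card_union_of_disjoint hdisj,
      Finset.card_image_of_injective _ Sum.inl_injective,
      Finset.card_image_of_injective _ Sum.inr_injective, hW, Finset.card_univ, hCp]
    ring
  set X : Finset (C ⊕ Cp) := Wp \ W' with hXdef
  set B : (V ⊕ Vp) → Finset (C ⊕ Cp) :=
    Sum.elim (fun i => (A i).image Sum.inl) (fun _ => X) with hBdef
  have hEJRB := hW' B (fun i => rfl) (fun j => Finset.sdiff_subset)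
  have hX : X = ∅ := by
    by_contra hne
    have hXpos : 0 < X.card := Finset.card_pos.2 (Finset.nonempty_iff_ne_empty.2 hne)
    set ℓ' := min X.card k with hℓ'
    have hℓ'pos : 1 ≤ ℓ' := le_min hXpos hk
    set V'' : Finset (V ⊕ Vp) := Finset.univ.image Sum.inr with hV''
    have hV''card : V''.card = Fintype.card V := by
      rw [hV'', Finset.card_image_of_injective _ Sum.inr_injective,
        Finset.card_univ, hVp]
    have hcoh : ℓ' * Fintype.card (V ⊕ Vp) ≤ 2 * k * V''.card := by
      rw [Fintype.card_sum, hVp, hV''card]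
      calc ℓ' * (Fintype.card V + Fintype.card V)
          ≤ k * (Fintype.card V + Fintype.card V) :=
            Nat.mul_le_mul_right _ (min_le_right _ _)
        _ = 2 * k * Fintype.card V := by ring
    have hcom : ℓ' ≤ (Finset.univ.filter (fun c : C ⊕ Cp => ∀ i ∈ V'', c ∈ B i)).card := by
      refine le_trans (min_le_left _ _) (Finset.card_le_card ?_)
      intro c hc
      simp only [Finset.mem_filter, Finset.mem_univ, true_and]
      intro i hi
      rw [hV''] at hi
      obtain ⟨j, _, rfl⟩ := Finset.mem_image.1 hi
      simpa [hBdef] using hc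
    obtain ⟨i, hiV'', hcount⟩ := hEJRB ℓ' hℓ'pos V'' hcoh
      (by convert hcom using 2; exact Finset.filter_congr_decidable _ _ _)
    rw [hV''] at hiV''
    obtain ⟨j, _, rfl⟩ := Finset.mem_image.1 hiV''
    have hempty : B (Sum.inr j) ∩ W' = ∅ := by
      rw [hBdef]; simp only [Sum.elim_inr]
      rw [hXdef]; exact Finset.sdiff_inter_self _ _
    rw [hempty] at hcount
    simp at hcount
    omega
  have hWsub : Wp ⊆ W' := by
    rwa [hXdef, Finset.sdiff_eq_empty_iff_subset] at hX
  have hWeq : Wp = W' := Finset.eq_of_subset_of_card_le hWsub (by rw [hW'card, hWpcard])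
  intro ℓ hℓ V' hcoh hcom
  set V'' : Finset (V ⊕ Vp) := V'.image Sum.inl with hV''
  have hV''card : V''.card = V'.card := Finset.card_image_of_injective _ Sum.inl_injective
  have hcoh2 : ℓ * Fintype.card (V ⊕ Vp) ≤ 2 * k * V''.card := by
    rw [Fintype.card_sum, hVp, hV''card]
    calc ℓ * (Fintype.card V + Fintype.card V) = 2 * (ℓ * Fintype.card V) := by ring
      _ ≤ 2 * (k * V'.card) := Nat.mul_le_mul_left 2 hcoh
      _ = 2 * k * V'.card := by ring
  have hcom2 : ℓ ≤ (Finset.univ.filter (fun c : C ⊕ Cp => ∀ i ∈ V'', c ∈ B i)).card := by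
    have hcom' : ℓ ≤ ((Finset.univ.filter (fun c : C => ∀ i ∈ V', c ∈ A i)).image
        (Sum.inl : C → C ⊕ Cp)).card := by
      rw [Finset.card_image_of_injective _ Sum.inl_injective]
      convert hcom using 2
      ext c
      simp
    refine le_trans hcom' (Finset.card_le_card ?_)
    intro x hx
    obtain ⟨c, hc, rfl⟩ := Finset.mem_image.1 hx
    simp only [Finset.mem_filter, Finset.mem_univ, true_and] at hc ⊢
    intro i hi
    rw [hV''] at hi
    obtain ⟨i', hi', rfl⟩ := Finset.mem_image.1 hi
    rw [hBdef]; simp only [Sum.elim_inl]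
    exact Finset.mem_image_of_mem _ (hc i' hi')
  obtain ⟨x, hx, hcount⟩ := hEJRB ℓ hℓ V'' hcoh2
    (by convert hcom2 using 2; exact Finset.filter_congr_decidable _ _ _)
  rw [hV''] at hx
  obtain ⟨i, hi, rfl⟩ := Finset.mem_image.1 hx
  refine ⟨i, hi, ?_⟩
  have hrw : B (Sum.inl i) ∩ W' = (A i ∩ W).image Sum.inl := by
    rw [hBdef]; simp only [Sum.elim_inl]
    rw [← hWeq, hWp]
    exact aux_inter_img _ _
  rw [hrw, Finset.card_image_of_injective _ Sum.inl_injective] at hcount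
  exact hcount

end Aux2

/-- Candidate-Probability reduction for ExistsNecEJR: extend the
election `(V, C, A, k)` and a committee `W ⊆ C` of size `k` by a set `Vp` of
`n` new voters and a set `Cp` of `k` new candidates; in the extended election
(with `2n` voters and parameter `2k`) the plausible profiles are exactly those
where each original voter approves exactly `A i` and each new voter approves an
arbitrary subset of `W ∪ Cp`.  Then `W` satisfies EJR (parameter `k`) iff some
size-`2k` committee over `C ⊕ Cp` satisfies EJR under every plausible profile
of the extended election; moreover, in that case `W ∪ Cp` is such a committee. -/
theorem stmt_12 {V C Vp Cp : Type*}
    [Fintype V] [Fintype C] [DecidableEq C] [Fintype Vp] [Fintype Cp] [DecidableEq Cp]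
    (hn : 1 ≤ Fintype.card V)
    (k : ℕ) (hk : 1 ≤ k)
    (hVp : Fintype.card Vp = Fintype.card V)
    (hCp : Fintype.card Cp = k)
    (A : V → Finset C) (W : Finset C) (hW : W.card = k) :
    (satisfiesEJR A k W ↔
      (∃ W' : Finset (C ⊕ Cp), W'.card = 2 * k ∧
        ∀ B : (V ⊕ Vp) → Finset (C ⊕ Cp),
          (∀ i : V, B (Sum.inl i) = (A i).image Sum.inl) →
          (∀ j : Vp, B (Sum.inr j) ⊆
            W.image Sum.inl ∪ Finset.univ.image (Sum.inr : Cp → C ⊕ Cp)) →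
          satisfiesEJR B (2 * k) W')) ∧
    (satisfiesEJR A k W →
      ∀ B : (V ⊕ Vp) → Finset (C ⊕ Cp),
        (∀ i : V, B (Sum.inl i) = (A i).image Sum.inl) →
        (∀ j : Vp, B (Sum.inr j) ⊆
          W.image Sum.inl ∪ Finset.univ.image (Sum.inr : Cp → C ⊕ Cp)) →
        satisfiesEJR B (2 * k)
          (W.image Sum.inl ∪ Finset.univ.image (Sum.inr : Cp → C ⊕ Cp))) := by
  constructor
  · constructor
    · intro h
      refine ⟨W.image Sum.inl ∪ Finset.univ.image (Sum.inr : Cp → C ⊕ Cp), ?_, ?_⟩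
      · rw [Finset.card_union_of_disjoint (by simp [Finset.disjoint_left]),
          Finset.card_image_of_injective _ Sum.inl_injective,
          Finset.card_image_of_injective _ Sum.inr_injective, hW,
          Finset.card_univ, hCp]
        ring
      · intro B hB1 hB2
        exact aux_forward hn k hk hVp A W h B hB1 hB2
    · rintro ⟨W', hW'card, hW'⟩
      exact aux_backward hn k hk hVp hCp A W hW W' hW'card hW'
  · intro h B hB1 hB2
    exact aux_forward hn k hk hVp A W h B hB1 hB2
end

section
/- Candidate-Probability reduction for ExistsNecPJR: let V be a finite set of n ≥ 1 voters with approval profile A : V → 2^C over a finite candidate set C, let k ≥ 1, and let W ⊆ C with |W| = k. Let V⁺ be a set of n new voters and C⁺ a set of k new candidates, disjoint from V and C respectively. In the extended election with voter set V ∪ V⁺ (2n voters), candidate set C ∪ C⁺, and parameter 2k, the plausible approval profiles are exactly those in which each original voter i ∈ V approves exactly A_i and each new voter in V⁺ approves an arbitrary subset of W ∪ C⁺. Then W satisfies PJR with respect to (A_i)_{i∈V} and parameter k if and only if there exists a committee W' ⊆ C ∪ C⁺ with |W'| = 2k that satisfies PJR (with respect to parameter 2k over the 2n voters) under every plausible approval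 profile of the extended election; moreover when this holds, W' = W ∪ C⁺ is such a committee. -/
/-- A committee `W` satisfies proportional justified representation (PJR) with
respect to the approval profile `A` and parameter `k`: for every `ℓ ≥ 1` and
every `ℓ`-cohesive group `V'` (i.e. `k * |V'| ≥ ℓ * n` and the voters of `V'`
commonly approve at least `ℓ` candidates), the union of the approval sets of
`V'` contains at least `ℓ` members of `W`. -/
def satisfiesPJR {V C : Type*} [Fintype V] [Fintype C] [DecidableEq C]
    (A : V → Finset C) (k : ℕ) (W : Finset C) : Prop :=
  ∀ ℓ : ℕ, 1 ≤ ℓ → ∀ V' : Finset V,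
    ℓ * Fintype.card V ≤ k * V'.card →
    ℓ ≤ (Finset.univ.filter (fun c : C => ∀ i ∈ V', c ∈ A i)).card →
    ℓ ≤ ((V'.biUnion A) ∩ W).card

lemma fwd_aux {V C Vp Cp : Type*}
    [Fintype V] [DecidableEq V] [Fintype C] [DecidableEq C]
    [Fintype Vp] [DecidableEq Vp] [Fintype Cp] [DecidableEq Cp]
    (hn : 1 ≤ Fintype.card V) (k : ℕ)
    (hVp : Fintype.card Vp = Fintype.card V)
    (A : V → Finset C) (W : Finset C)
    (hPJR : satisfiesPJR A k W)
    (B : (V ⊕ Vp) → Finset (C ⊕ Cp))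
    (hB1 : ∀ i : V, B (Sum.inl i) = (A i).image Sum.inl)
    (hB2 : ∀ j : Vp, B (Sum.inr j) ⊆
        W.image Sum.inl ∪ Finset.univ.image (Sum.inr : Cp → C ⊕ Cp)) :
    satisfiesPJR B (2 * k)
      (W.image Sum.inl ∪ Finset.univ.image (Sum.inr : Cp → C ⊕ Cp)) := by
  intro ℓ hℓ V'' hcoh hcom
  set W' := W.image Sum.inl ∪ Finset.univ.image (Sum.inr : Cp → C ⊕ Cp) with hW'
  by_cases hex : ∃ j : Vp, Sum.inr j ∈ V''
  · obtain ⟨j, hj⟩ := hex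
    refine le_trans hcom (Finset.card_le_card ?_)
    intro c hc
    simp only [Finset.mem_filter, Finset.mem_univ, true_and] at hc
    have hc1 : c ∈ B (Sum.inr j) := hc _ hj
    exact Finset.mem_inter.2 ⟨Finset.mem_biUnion.2 ⟨_, hj, hc1⟩, hB2 j hc1⟩
  · push_neg at hex
    set V₁ : Finset V := Finset.univ.filter (fun i => Sum.inl i ∈ V'') with hV₁
    have hV''eq : V'' = V₁.image Sum.inl := by
      ext x
      cases x with
      | inl i => simp [hV₁]
      | inr j =>
        simp only [Finset.mem_image]
        constructor
        · intro h; exact absurd h (hex j)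
        · rintro ⟨i, _, h⟩; exact absurd h (by simp)
    have hcardeq : V''.card = V₁.card := by
      rw [hV''eq, Finset.card_image_of_injective _ Sum.inl_injective]
    have hcardsum : Fintype.card (V ⊕ Vp) = Fintype.card V + Fintype.card V := by
      rw [Fintype.card_sum, hVp]
    -- cohesiveness for the original election
    have hcoh' : ℓ * Fintype.card V ≤ k * V₁.card := by
      have h2 : 2 * (ℓ * Fintype.card V) ≤ 2 * (k * V₁.card) := by
        calc 2 * (ℓ * Fintype.card V) = ℓ * (Fintype.card V + Fintype.card V) := by ring
          _ ≤ 2 * k * V''.card := hcardsum ▸ hcoh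
          _ = 2 * (k * V₁.card) := by rw [hcardeq]; ring
      exact Nat.le_of_mul_le_mul_left h2 (by norm_num)
    -- V₁ nonempty
    have hne : V₁.Nonempty := by
      rw [← Finset.card_pos]
      have h1 : 1 * 1 ≤ ℓ * Fintype.card V := Nat.mul_le_mul hℓ hn
      have hpos : 0 < k * V₁.card := lt_of_lt_of_le one_pos (by simpa using le_trans h1 hcoh')
      rcases Nat.eq_zero_or_pos V₁.card with h0 | h
      · rw [h0, Nat.mul_zero] at hpos; exact absurd hpos (by simp)
      · exact h
    -- bound the original common set
    have hcom2 : ℓ ≤ (Finset.filter (fun d : C => ∀ i ∈ V₁, d ∈ A i) Finset.univ).card := by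
      refine le_trans hcom ?_
      rw [← Finset.card_image_of_injective
        (Finset.filter (fun d : C => ∀ i ∈ V₁, d ∈ A i) Finset.univ)
        (Sum.inl_injective : Function.Injective (Sum.inl : C → C ⊕ Cp))]
      apply Finset.card_le_card
      intro c hc
      simp only [Finset.mem_filter, Finset.mem_univ, true_and] at hc
      cases c with
      | inl d =>
        rw [Finset.mem_image]
        refine ⟨d, Finset.mem_filter.2 ⟨Finset.mem_univ _, fun i hi => ?_⟩, rfl⟩
        have := hc (Sum.inl i) (by rw [hV''eq]; exact Finset.mem_image_of_mem _ hi)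
        rw [hB1 i] at this
        simpa [Finset.mem_image] using this
      | inr e =>
        exfalso
        obtain ⟨i, hi⟩ := hne
        have := hc (Sum.inl i) (by rw [hV''eq]; exact Finset.mem_image_of_mem _ hi)
        rw [hB1 i] at this
        simp [Finset.mem_image] at this
    have hmain : ℓ ≤ ((V₁.biUnion A) ∩ W).card := hPJR ℓ hℓ V₁ hcoh' (by convert hcom2)
    calc ℓ ≤ ((V₁.biUnion A) ∩ W).card := hmain
      _ = (((V₁.biUnion A) ∩ W).image Sum.inl).card :=
          (Finset.card_image_of_injective _ Sum.inl_injective).symm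
      _ ≤ ((V''.biUnion B) ∩ W').card := by
          apply Finset.card_le_card
          intro c hc
          rw [Finset.mem_image] at hc
          obtain ⟨d, hd, rfl⟩ := hc
          rw [Finset.mem_inter] at hd
          obtain ⟨hd1, hd2⟩ := hd
          rw [Finset.mem_biUnion] at hd1
          obtain ⟨i, hi, hdi⟩ := hd1
          refine Finset.mem_inter.2 ⟨Finset.mem_biUnion.2 ⟨Sum.inl i, ?_, ?_⟩, ?_⟩
          · rw [hV''eq]; exact Finset.mem_image_of_mem _ hi
          · rw [hB1 i]; exact Finset.mem_image_of_mem _ hdi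
          · exact Finset.mem_union_left _ (Finset.mem_image_of_mem _ hd2)

lemma bwd_aux {V C Vp Cp : Type*}
    [Fintype V] [DecidableEq V] [Fintype C] [DecidableEq C]
    [Fintype Vp] [DecidableEq Vp] [Fintype Cp] [DecidableEq Cp]
    (hn : 1 ≤ Fintype.card V) (k : ℕ) (hk : 1 ≤ k)
    (hVp : Fintype.card Vp = Fintype.card V)
    (hCp : Fintype.card Cp = k)
    (A : V → Finset C) (W : Finset C) (hW : W.card = k)
    (W' : Finset (C ⊕ Cp)) (hW'card : W'.card = 2 * k)
    (hall : ∀ B : (V ⊕ Vp) → Finset (C ⊕ Cp),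
      (∀ i : V, B (Sum.inl i) = (A i).image Sum.inl) →
      (∀ j : Vp, B (Sum.inr j) ⊆
        W.image Sum.inl ∪ Finset.univ.image (Sum.inr : Cp → C ⊕ Cp)) →
      satisfiesPJR B (2 * k) W') :
    satisfiesPJR A k W := by
  have hcardsum : Fintype.card (V ⊕ Vp) = Fintype.card V + Fintype.card V := by
    rw [Fintype.card_sum, hVp]
  have hcardVp : (Finset.univ.image (Sum.inr : Vp → V ⊕ Vp)).card = Fintype.card V := by
    rw [Finset.card_image_of_injective _ Sum.inr_injective, Finset.card_univ, hVp]
  have hVpmem : ∀ x ∈ Finset.univ.image (Sum.inr : Vp → V ⊕ Vp), ∃ j : Vp, x = Sum.inr j := by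
    intro x hx
    rw [Finset.mem_image] at hx
    obtain ⟨j, _, rfl⟩ := hx
    exact ⟨j, rfl⟩
  -- Step 1: Cp ⊆ W' (via the profile where new voters approve exactly Cp)
  have hstep : ∀ T : Finset (C ⊕ Cp),
      T ⊆ W.image Sum.inl ∪ Finset.univ.image (Sum.inr : Cp → C ⊕ Cp) →
      T.card = k → T ⊆ W' := by
    intro T hTsub hTcard
    set B : (V ⊕ Vp) → Finset (C ⊕ Cp) :=
      Sum.elim (fun i => (A i).image Sum.inl) (fun _ => T) with hB
    have hpjr := hall B (fun i => rfl) (fun j => hTsub)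
    have h := hpjr k hk (Finset.univ.image (Sum.inr : Vp → V ⊕ Vp))
      (by rw [hcardVp, hcardsum]; ring_nf; exact le_refl _)
      (by
        refine le_trans (le_of_eq hTcard.symm) (Finset.card_le_card ?_)
        intro c hc
        simp only [Finset.mem_filter, Finset.mem_univ, true_and]
        intro x hx
        obtain ⟨j, rfl⟩ := hVpmem x hx
        exact hc)
    -- the union of approvals of the new voters is T
    have hsub : ((Finset.univ.image (Sum.inr : Vp → V ⊕ Vp)).biUnion B) ∩ W' ⊆ T ∩ W' := by
      apply Finset.inter_subset_inter_right
      intro c hc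
      rw [Finset.mem_biUnion] at hc
      obtain ⟨x, hx, hcx⟩ := hc
      obtain ⟨j, rfl⟩ := hVpmem x hx
      exact hcx
    have hTW' : k ≤ (T ∩ W').card := le_trans h (Finset.card_le_card hsub)
    have : T ∩ W' = T := by
      apply Finset.eq_of_subset_of_card_le (Finset.inter_subset_left)
      rw [hTcard]; exact hTW'
    rw [← this]
    exact Finset.inter_subset_right
  have hdisj : Disjoint (W.image (Sum.inl : C → C ⊕ Cp))
      (Finset.univ.image (Sum.inr : Cp → C ⊕ Cp)) := by
    rw [Finset.disjoint_left]
    intro a ha hb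
    rw [Finset.mem_image] at ha hb
    obtain ⟨c, _, rfl⟩ := ha
    obtain ⟨d, _, h⟩ := hb
    exact absurd h (by simp)
  have hWsub : W.image Sum.inl ⊆ W' :=
    hstep _ Finset.subset_union_left
      (by rw [Finset.card_image_of_injective _ Sum.inl_injective, hW])
  have hCpsub : Finset.univ.image (Sum.inr : Cp → C ⊕ Cp) ⊆ W' :=
    hstep _ Finset.subset_union_right
      (by rw [Finset.card_image_of_injective _ Sum.inr_injective, Finset.card_univ, hCp])
  have hW'eq : W' = W.image Sum.inl ∪ Finset.univ.image (Sum.inr : Cp → C ⊕ Cp) := by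
    symm
    apply Finset.eq_of_subset_of_card_le (Finset.union_subset hWsub hCpsub)
    rw [hW'card, Finset.card_union_of_disjoint hdisj,
      Finset.card_image_of_injective _ Sum.inl_injective,
      Finset.card_image_of_injective _ Sum.inr_injective, Finset.card_univ, hW, hCp]
    omega
  -- Step 2: use the profile where new voters approve nothing
  set B₀ : (V ⊕ Vp) → Finset (C ⊕ Cp) :=
    Sum.elim (fun i => (A i).image Sum.inl) (fun _ => ∅) with hB₀
  have hpjr := hall B₀ (fun i => rfl) (fun j => Finset.empty_subset _)
  intro ℓ hℓ V' hcoh hcom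
  have h := hpjr ℓ hℓ (V'.image (Sum.inl : V → V ⊕ Vp))
    (by
      rw [Finset.card_image_of_injective _ Sum.inl_injective, hcardsum]
      calc ℓ * (Fintype.card V + Fintype.card V) = 2 * (ℓ * Fintype.card V) := by ring
        _ ≤ 2 * (k * V'.card) := Nat.mul_le_mul_left 2 hcoh
        _ = 2 * k * V'.card := by ring)
    (by
      refine le_trans hcom ?_
      rw [← Finset.card_image_of_injective _
        (Sum.inl_injective : Function.Injective (Sum.inl : C → C ⊕ Cp))]
      apply Finset.card_le_card
      intro c hc
      rw [Finset.mem_image] at hc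
      obtain ⟨d, hd, rfl⟩ := hc
      simp only [Finset.mem_filter, Finset.mem_univ, true_and] at hd
      simp only [Finset.mem_filter, Finset.mem_univ, true_and]
      intro x hx
      rw [Finset.mem_image] at hx
      obtain ⟨i, hi, rfl⟩ := hx
      show Sum.inl d ∈ B₀ (Sum.inl i)
      exact Finset.mem_image_of_mem _ (hd i hi))
  refine le_trans h ?_
  rw [← Finset.card_image_of_injective ((V'.biUnion A) ∩ W)
    (Sum.inl_injective : Function.Injective (Sum.inl : C → C ⊕ Cp))]
  apply Finset.card_le_card
  intro c hc
  rw [Finset.mem_inter] at hc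
  obtain ⟨hc1, hc2⟩ := hc
  rw [Finset.mem_biUnion] at hc1
  obtain ⟨x, hx, hcx⟩ := hc1
  rw [Finset.mem_image] at hx
  obtain ⟨i, hi, rfl⟩ := hx
  have hcx' : c ∈ (A i).image Sum.inl := hcx
  rw [Finset.mem_image] at hcx'
  obtain ⟨d, hd, rfl⟩ := hcx'
  rw [hW'eq, Finset.mem_union] at hc2
  have hdW : d ∈ W := by
    rcases hc2 with h' | h'
    · rw [Finset.mem_image] at h'
      obtain ⟨d', hd', he⟩ := h'
      rwa [Sum.inl_injective he] at hd'
    · rw [Finset.mem_image] at h'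
      obtain ⟨e, _, he⟩ := h'
      exact absurd he (by simp)
  exact Finset.mem_image_of_mem _
    (Finset.mem_inter.2 ⟨Finset.mem_biUnion.2 ⟨i, hi, hd⟩, hdW⟩)

/-- Candidate-Probability reduction for ExistsNecPJR: extend the
election `(V, C, A, k)` and a committee `W ⊆ C` of size `k` by a set `Vp` of
`n` new voters and a set `Cp` of `k` new candidates; in the extended election
(with `2n` voters and parameter `2k`) the plausible profiles are exactly those
where each original voter approves exactly `A i` and each new voter approves an
arbitrary subset of `W ∪ Cp`.  Then `W` satisfies PJR (parameter `k`) iff some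
size-`2k` committee over `C ⊕ Cp` satisfies PJR under every plausible profile
of the extended election; moreover, in that case `W ∪ Cp` is such a committee. -/
theorem stmt_13 {V C Vp Cp : Type*}
    [Fintype V] [DecidableEq V] [Fintype C] [DecidableEq C]
    [Fintype Vp] [DecidableEq Vp] [Fintype Cp] [DecidableEq Cp]
    (hn : 1 ≤ Fintype.card V)
    (k : ℕ) (hk : 1 ≤ k)
    (hVp : Fintype.card Vp = Fintype.card V)
    (hCp : Fintype.card Cp = k)
    (A : V → Finset C) (W : Finset C) (hW : W.card = k) :
    (satisfiesPJR A k W ↔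
      (∃ W' : Finset (C ⊕ Cp), W'.card = 2 * k ∧
        ∀ B : (V ⊕ Vp) → Finset (C ⊕ Cp),
          (∀ i : V, B (Sum.inl i) = (A i).image Sum.inl) →
          (∀ j : Vp, B (Sum.inr j) ⊆
            W.image Sum.inl ∪ Finset.univ.image (Sum.inr : Cp → C ⊕ Cp)) →
          satisfiesPJR B (2 * k) W')) ∧
    (satisfiesPJR A k W →
      ∀ B : (V ⊕ Vp) → Finset (C ⊕ Cp),
        (∀ i : V, B (Sum.inl i) = (A i).image Sum.inl) →
        (∀ j : Vp, B (Sum.inr j) ⊆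
          W.image Sum.inl ∪ Finset.univ.image (Sum.inr : Cp → C ⊕ Cp)) →
        satisfiesPJR B (2 * k)
          (W.image Sum.inl ∪ Finset.univ.image (Sum.inr : Cp → C ⊕ Cp))) := by
  refine ⟨⟨fun hPJR => ?_, fun h => ?_⟩, fun hPJR B hB1 hB2 => fwd_aux hn k hVp A W hPJR B hB1 hB2⟩
  · refine ⟨W.image Sum.inl ∪ Finset.univ.image (Sum.inr : Cp → C ⊕ Cp), ?_, ?_⟩
    · have hdisj : Disjoint (W.image (Sum.inl : C → C ⊕ Cp))
          (Finset.univ.image (Sum.inr : Cp → C ⊕ Cp)) := by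
        rw [Finset.disjoint_left]
        intro a ha hb
        rw [Finset.mem_image] at ha hb
        obtain ⟨c, _, rfl⟩ := ha
        obtain ⟨d, _, h⟩ := hb
        exact absurd h (by simp)
      rw [Finset.card_union_of_disjoint hdisj,
        Finset.card_image_of_injective _ Sum.inl_injective,
        Finset.card_image_of_injective _ Sum.inr_injective, Finset.card_univ, hW, hCp]
      omega
    · exact fun B hB1 hB2 => fwd_aux hn k hVp A W hPJR B hB1 hB2
  · obtain ⟨W', hW'card, hall⟩ := h
    exact bwd_aux hn k hk hVp hCp A W hW W' hW'card hall
end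

section
/- Lottery reduction for ExistsNecEJR: let V be a finite set of n ≥ 1 voters with approval profile A : V → 2^C over a finite candidate set C, let k ≥ 1, and let W ⊆ C with |W| = k. Let V⁺ be a set of n new voters and C⁺ a set of k new candidates, disjoint from V and C respectively. In the extended election with voter set V ∪ V⁺ (2n voters), candidate set C ∪ C⁺, and parameter 2k, the plausible approval profiles are exactly those in which each original voter i ∈ V approves exactly A_i and each new voter in V⁺ approves exactly one candidate of W ∪ C⁺ (a singleton {c} with c ∈ W ∪ C⁺, chosen independently per voter). Then W satisfies EJR with respect to (A_i)_{i∈V} and parameter k if and only if there exists a committee W' ⊆ C ∪ C⁺ with |W'| = 2k that satisfies EJR (with respect to parameter 2k over the 2n voters) under every plausible approval profile of the extended election. -/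
set_option maxHeartbeats 1000000

private lemma aux_filter_le_one {β : Type*} [Fintype β] [DecidableEq β]
    {q : β → Prop} {instq : DecidablePred q} (c : β) (h : ∀ x, q x → x = c) :
    (@Finset.filter β q instq Finset.univ).card ≤ 1 := by
  refine le_trans (Finset.card_le_card (t := {c}) ?_) (by simp)
  intro x hx
  rw [Finset.mem_filter] at hx
  simp [h x hx.2]

private lemma aux_one_le_filter {β : Type*} [Fintype β] [DecidableEq β]
    {q : β → Prop} {instq : DecidablePred q} (c : β) (h : q c) :
    1 ≤ (@Finset.filter β q instq Finset.univ).card :=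
  Finset.card_pos.mpr ⟨c, Finset.mem_filter.mpr ⟨Finset.mem_univ _, h⟩⟩

private lemma aux_filter_card_le_of_preim {α β : Type*} [Fintype α] [Fintype β]
    [DecidableEq β] (f : α → β) (hf : Function.Injective f)
    {p : α → Prop} {q : β → Prop} {instp : DecidablePred p} {instq : DecidablePred q}
    (h : ∀ y, q y → ∃ x, p x ∧ f x = y) :
    (@Finset.filter β q instq Finset.univ).card ≤ (@Finset.filter α p instp Finset.univ).card := by
  have hsub : @Finset.filter β q instq Finset.univ ⊆
      (@Finset.filter α p instp Finset.univ).image f := by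
    intro y hy
    rw [Finset.mem_filter] at hy
    obtain ⟨x, hx, rfl⟩ := h y hy.2
    exact Finset.mem_image_of_mem _ (Finset.mem_filter.mpr ⟨Finset.mem_univ _, hx⟩)
  exact le_trans (Finset.card_le_card hsub)
    (le_of_eq (Finset.card_image_of_injective _ hf))

private lemma aux_filter_card_le_of_im {α β : Type*} [Fintype α] [Fintype β]
    [DecidableEq β] (f : α → β) (hf : Function.Injective f)
    {p : α → Prop} {q : β → Prop} {instp : DecidablePred p} {instq : DecidablePred q}
    (h : ∀ x, p x → q (f x)) :
    (@Finset.filter α p instp Finset.univ).card ≤ (@Finset.filter β q instq Finset.univ).card := by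
  have hsub : (@Finset.filter α p instp Finset.univ).image f ⊆
      @Finset.filter β q instq Finset.univ := by
    intro y hy
    obtain ⟨x, hx, rfl⟩ := Finset.mem_image.mp hy
    rw [Finset.mem_filter] at hx
    exact Finset.mem_filter.mpr ⟨Finset.mem_univ _, h x hx.2⟩
  exact le_trans (le_of_eq (Finset.card_image_of_injective _ hf).symm)
    (Finset.card_le_card hsub)

/-- Lottery reduction for ExistsNecEJR: extend the election
`(V, C, A, k)` and a committee `W ⊆ C` of size `k` by a set `Vp` of `n` new
voters and a set `Cp` of `k` new candidates; in the extended election (with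
`2n` voters and parameter `2k`) the plausible profiles are exactly those where
each original voter approves exactly `A i` and each new voter approves exactly
one candidate of `W ∪ Cp` (a singleton).  Then `W` satisfies EJR (parameter
`k`) iff some size-`2k` committee over `C ⊕ Cp` satisfies EJR under every
plausible profile of the extended election. -/
theorem stmt_14 {V C Vp Cp : Type*}
    [Fintype V] [Fintype C] [DecidableEq C] [Fintype Vp] [Fintype Cp] [DecidableEq Cp]
    (hn : 1 ≤ Fintype.card V)
    (k : ℕ) (hk : 1 ≤ k)
    (hVp : Fintype.card Vp = Fintype.card V)
    (hCp : Fintype.card Cp = k)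
    (A : V → Finset C) (W : Finset C) (hW : W.card = k) :
    satisfiesEJR A k W ↔
      (∃ W' : Finset (C ⊕ Cp), W'.card = 2 * k ∧
        ∀ B : (V ⊕ Vp) → Finset (C ⊕ Cp),
          (∀ i : V, B (Sum.inl i) = (A i).image Sum.inl) →
          (∀ j : Vp, ∃ c ∈ W.image Sum.inl ∪ Finset.univ.image (Sum.inr : Cp → C ⊕ Cp),
            B (Sum.inr j) = {c}) →
          satisfiesEJR B (2 * k) W') := by
  classical
  simp only [satisfiesEJR]
  set n := Fintype.card V with hn_def
  set WCp : Finset (C ⊕ Cp) :=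
    W.image Sum.inl ∪ Finset.univ.image (Sum.inr : Cp → C ⊕ Cp) with hWCp_def
  have hdisj : Disjoint (W.image (Sum.inl : C → C ⊕ Cp))
      (Finset.univ.image (Sum.inr : Cp → C ⊕ Cp)) := by
    simp [Finset.disjoint_left]
  have hWCp_card : WCp.card = 2 * k := by
    rw [hWCp_def, Finset.card_union_of_disjoint hdisj,
      Finset.card_image_of_injective _ Sum.inl_injective,
      Finset.card_image_of_injective _ Sum.inr_injective, hW,
      Finset.card_univ, hCp]
    ring
  have hcardsum : Fintype.card (V ⊕ Vp) = n + n := by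
    rw [Fintype.card_sum, hVp]
  constructor
  · -- forward direction
    intro hEJR
    refine ⟨WCp, hWCp_card, ?_⟩
    intro B hB hBp ℓ hℓ V'' hsize hcommon
    rw [hcardsum] at hsize
    by_cases hnewv : ∃ j : Vp, Sum.inr j ∈ V''
    · -- some new voter lies in the group: ℓ must be 1
      obtain ⟨j, hj⟩ := hnewv
      obtain ⟨c, hcW, hBc⟩ := hBp j
      have hℓ1 : ℓ ≤ 1 := by
        refine hcommon.trans (aux_filter_le_one c ?_)
        intro x hx
        have := hx _ hj
        rw [hBc] at this
        simpa using this
      refine ⟨Sum.inr j, hj, ?_⟩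
      rw [hBc]
      have hmem : c ∈ ({c} : Finset (C ⊕ Cp)) ∩ WCp :=
        Finset.mem_inter.mpr ⟨Finset.mem_singleton_self c, hcW⟩
      exact hℓ1.trans (Finset.card_pos.mpr ⟨c, hmem⟩)
    · -- only original voters
      push_neg at hnewv
      set V' : Finset V := V''.preimage Sum.inl (Sum.inl_injective.injOn) with hV'_def
      have hV''eq : V'' = V'.image Sum.inl := by
        ext x
        cases x with
        | inl v => simp [hV'_def, Finset.mem_preimage]
        | inr j => simp [hV'_def, hnewv j]
      have hcard' : V''.card = V'.card := by
        rw [hV''eq, Finset.card_image_of_injective _ Sum.inl_injective]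
      have hpos : 0 < V''.card := by
        rcases Nat.eq_zero_or_pos V''.card with h | h
        · rw [h, Nat.mul_zero] at hsize
          have : 1 * (1 + 1) ≤ ℓ * (n + n) := Nat.mul_le_mul hℓ (by omega)
          omega
        · exact h
      obtain ⟨x0, hx0⟩ := Finset.card_pos.mp hpos
      obtain ⟨i0, hi0⟩ : ∃ i0 : V, Sum.inl i0 = x0 := by
        cases x0 with
        | inl v => exact ⟨v, rfl⟩
        | inr j => exact absurd hx0 (hnewv j)
      have hsize' : ℓ * n ≤ k * V'.card := by
        rw [hcard'] at hsize
        have h1 : 2 * (ℓ * n) ≤ 2 * (k * V'.card) := by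
          calc 2 * (ℓ * n) = ℓ * (n + n) := by ring
            _ ≤ 2 * k * V'.card := hsize
            _ = 2 * (k * V'.card) := by ring
        exact Nat.le_of_mul_le_mul_left h1 two_pos
      obtain ⟨i, hi, hAi⟩ := hEJR ℓ hℓ V' hsize'
        (hcommon.trans (aux_filter_card_le_of_preim Sum.inl Sum.inl_injective (by
          intro x hx
          have hx0' := hx x0 hx0
          rw [← hi0, hB i0] at hx0'
          obtain ⟨c, _, rfl⟩ := Finset.mem_image.mp hx0'
          refine ⟨c, ?_, rfl⟩
          intro i hi
          have hmem : Sum.inl i ∈ V'' := by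
            rw [hV''eq]; exact Finset.mem_image_of_mem _ hi
          have hmem2 := hx _ hmem
          rw [hB i] at hmem2
          obtain ⟨c', hc', hcc'⟩ := Finset.mem_image.mp hmem2
          rwa [Sum.inl_injective hcc'] at hc')))
      refine ⟨Sum.inl i, by rw [hV''eq]; exact Finset.mem_image_of_mem _ hi, ?_⟩
      have hsub2 : (A i ∩ W).image (Sum.inl : C → C ⊕ Cp) ⊆ B (Sum.inl i) ∩ WCp := by
        intro x hx
        obtain ⟨c, hc, rfl⟩ := Finset.mem_image.mp hx
        rw [Finset.mem_inter] at hc ⊢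
        refine ⟨by rw [hB i]; exact Finset.mem_image_of_mem _ hc.1, ?_⟩
        rw [hWCp_def]
        exact Finset.mem_union_left _ (Finset.mem_image_of_mem _ hc.2)
      calc ℓ ≤ (A i ∩ W).card := hAi
        _ = ((A i ∩ W).image (Sum.inl : C → C ⊕ Cp)).card :=
            (Finset.card_image_of_injective _ Sum.inl_injective).symm
        _ ≤ _ := Finset.card_le_card hsub2
  · -- backward direction
    rintro ⟨W', hW'card, hall⟩
    have hWCp_sub : WCp ⊆ W' := by
      intro c hc
      set B : (V ⊕ Vp) → Finset (C ⊕ Cp) :=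
        fun x => Sum.elim (fun i => (A i).image Sum.inl) (fun _ => {c}) x with hB_def
      have hEJRB := hall B (fun i => rfl) (fun j => ⟨c, hc, rfl⟩)
      obtain ⟨x, hx, hcard⟩ := hEJRB 1 le_rfl (Finset.univ.image Sum.inr)
        (by
          rw [hcardsum, Finset.card_image_of_injective _ Sum.inr_injective,
            Finset.card_univ, hVp]
          calc 1 * (n + n) = 2 * n := by ring
            _ ≤ 2 * k * n := by nlinarith)
        (by
          refine aux_one_le_filter c ?_
          intro x hx
          obtain ⟨j, _, rfl⟩ := Finset.mem_image.mp hx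
          simp [hB_def])
      obtain ⟨j, _, rfl⟩ := Finset.mem_image.mp hx
      simp only [hB_def, Sum.elim_inr] at hcard
      obtain ⟨y, hy⟩ := Finset.card_pos.mp hcard
      rw [Finset.mem_inter, Finset.mem_singleton] at hy
      exact hy.1 ▸ hy.2
    have hW'eq : W' = WCp :=
      (Finset.eq_of_subset_of_card_le hWCp_sub (by rw [hW'card, hWCp_card])).symm
    -- now prove EJR for the original election
    intro ℓ hℓ V' hsize hcommon
    have hCpne : Nonempty Cp := by
      rw [← Fintype.card_pos_iff, hCp]; omega
    obtain ⟨c0⟩ := hCpne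
    have hc0 : (Sum.inr c0 : C ⊕ Cp) ∈ WCp := by
      rw [hWCp_def]
      exact Finset.mem_union_right _ (Finset.mem_image_of_mem _ (Finset.mem_univ _))
    set B : (V ⊕ Vp) → Finset (C ⊕ Cp) :=
      fun x => Sum.elim (fun i => (A i).image Sum.inl) (fun _ => {Sum.inr c0}) x with hB_def
    have hEJRB := hall B (fun i => rfl) (fun j => ⟨Sum.inr c0, hc0, rfl⟩)
    obtain ⟨x, hx, hcard⟩ := hEJRB ℓ hℓ (V'.image Sum.inl)
      (by
        rw [hcardsum, Finset.card_image_of_injective _ Sum.inl_injective]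
        calc ℓ * (n + n) = 2 * (ℓ * n) := by ring
          _ ≤ 2 * (k * V'.card) := Nat.mul_le_mul_left 2 hsize
          _ = 2 * k * V'.card := by ring)
      (hcommon.trans (aux_filter_card_le_of_im Sum.inl Sum.inl_injective (by
        intro c hcmem y hy
        obtain ⟨i, hi, rfl⟩ := Finset.mem_image.mp hy
        simp only [hB_def, Sum.elim_inl]
        exact Finset.mem_image_of_mem _ (hcmem i hi))))
    obtain ⟨i, hi, rfl⟩ := Finset.mem_image.mp hx
    refine ⟨i, hi, ?_⟩
    have hsub : B (Sum.inl i) ∩ W' ⊆ (A i ∩ W).image Sum.inl := by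
      intro y hy
      rw [Finset.mem_inter] at hy
      obtain ⟨hy1, hy2⟩ := hy
      simp only [hB_def, Sum.elim_inl] at hy1
      obtain ⟨c, hcA, rfl⟩ := Finset.mem_image.mp hy1
      refine Finset.mem_image.mpr ⟨c, Finset.mem_inter.mpr ⟨hcA, ?_⟩, rfl⟩
      rw [hW'eq, hWCp_def, Finset.mem_union] at hy2
      rcases hy2 with h | h
      · obtain ⟨c', hc', hcc'⟩ := Finset.mem_image.mp h
        rwa [← Sum.inl_injective hcc']
      · obtain ⟨c', _, hcc'⟩ := Finset.mem_image.mp h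
        exact absurd hcc' (by simp)
    calc ℓ ≤ (B (Sum.inl i) ∩ W').card := hcard
      _ ≤ ((A i ∩ W).image (Sum.inl : C → C ⊕ Cp)).card := Finset.card_le_card hsub
      _ = (A i ∩ W).card := Finset.card_image_of_injective _ Sum.inl_injective
end
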